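/- arXiv:1911.04956 — 6 statements merged into one kernel-verified Lean document; each statement's English description precedes it below -/
import Mathlib

section
/- Let D be an acyclic digraph, u, x non-adjacent vertices of D, and D'' the digraph obtained from D by swapping both the in-neighbour sets and the out-neighbour sets of u and x. Then the niche hypergraph of D'' equals the hypergraph obtained from NH(D) by exchanging the roles of u and x in every hyperedge (i.e., applying the transposition of u and x to each hyperedge). -/
/-- A digraph: a finite vertex set together with a finite set of arcs. -/
structure FinDigraph (α : Type*) where
  verts : Finset α
  arcs : Finset (α × α)

namespace FinDigraph

variable {α : Type*} [DecidableEq α]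

/-- A digraph is legal if arcs join distinct vertices of the digraph and
at most one of `(u,v)`, `(v,u)` is an arc. -/
def IsLegal (D : FinDigraph α) : Prop :=
  (∀ a ∈ D.arcs, a.1 ∈ D.verts ∧ a.2 ∈ D.verts ∧ a.1 ≠ a.2) ∧
    ∀ u v : α, (u, v) ∈ D.arcs → (v, u) ∉ D.arcs

/-- A digraph is acyclic if it has no directed cycle `x₀, x₁, ..., x_{n-1}, x₀`
with `n ≥ 3` and all `xᵢ` distinct. -/
def IsAcyclic (D : FinDigraph α) : Prop :=
  ¬ ∃ (n : ℕ) (x : ℕ → α), 3 ≤ n ∧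
      (∀ i < n, ∀ j < n, i ≠ j → x i ≠ x j) ∧
      (∀ i, i + 1 < n → (x i, x (i + 1)) ∈ D.arcs) ∧
      (x (n - 1), x 0) ∈ D.arcs

/-- The in-neighbour set of a vertex. -/
def inN (D : FinDigraph α) (v : α) : Finset α :=
  D.verts.filter fun u => (u, v) ∈ D.arcs

/-- The out-neighbour set of a vertex. -/
def outN (D : FinDigraph α) (v : α) : Finset α :=
  D.verts.filter fun u => (v, u) ∈ D.arcs

/-- The (edge set of the) niche hypergraph of a digraph: all sets of size at least 2
which are the in-neighbour set or the out-neighbour set of some vertex. -/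
def NH (D : FinDigraph α) : Finset (Finset α) :=
  ((D.verts.image D.inN) ∪ (D.verts.image D.outN)).filter fun e => 2 ≤ e.card

end FinDigraph

/-- A hypergraph: a finite vertex set and a finite family of hyperedges, each a
subset of the vertices of size at least 2. -/
structure FinHypergraph (α : Type*) where
  verts : Finset α
  edges : Finset (Finset α)
  edge_sub : ∀ e ∈ edges, e ⊆ verts
  edge_card : ∀ e ∈ edges, 2 ≤ e.card

namespace FinHypergraph

variable {α : Type*} [DecidableEq α]

/-- The degree of a vertex: the number of hyperedges containing it. -/
def degree (H : FinHypergraph α) (v : α) : ℕ :=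
  (H.edges.filter fun e => v ∈ e).card

/-- A hypergraph is linear if distinct hyperedges share at most one vertex. -/
def IsLinear (H : FinHypergraph α) : Prop :=
  ∀ e ∈ H.edges, ∀ f ∈ H.edges, e ≠ f → (e ∩ f).card ≤ 1

/-- A hypergraph is a hypertree if there is a tree on its vertex set in which
every hyperedge induces a connected subgraph. -/
def IsHypertree (H : FinHypergraph α) : Prop :=
  ∃ T : SimpleGraph {x // x ∈ H.verts}, T.IsTree ∧
    ∀ e ∈ H.edges, (T.induce {x : {x // x ∈ H.verts} | x.1 ∈ e}).Connected

/-- The number of hyperedges intersecting `e` (other than `e` itself), i.e. the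
edge degree of `e`. -/
def nbrCount (H : FinHypergraph α) (e : Finset α) : ℕ :=
  (H.edges.filter fun f => f ≠ e ∧ (e ∩ f).Nonempty).card

/-- A twig: a hyperedge intersecting exactly one other hyperedge. -/
def IsTwig (H : FinHypergraph α) (e : Finset α) : Prop :=
  e ∈ H.edges ∧ H.nbrCount e = 1

/-- A trunk: a hyperedge intersecting at least two other hyperedges. -/
def IsTrunk (H : FinHypergraph α) (e : Finset α) : Prop :=
  e ∈ H.edges ∧ 2 ≤ H.nbrCount e

instance (H : FinHypergraph α) : DecidablePred H.IsTwig := fun e => by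
  unfold IsTwig; infer_instance

instance (H : FinHypergraph α) : DecidablePred H.IsTrunk := fun e => by
  unfold IsTrunk; infer_instance

/-- The branch of a trunk `e`: `e` together with all twigs intersecting `e`. -/
def branch (H : FinHypergraph α) (e : Finset α) : Finset (Finset α) :=
  insert e (H.edges.filter fun f => H.IsTwig f ∧ (e ∩ f).Nonempty)

/-- A family of hyperedges is connected if any two vertices covered by the family are
joined by a chain of vertices in which consecutive vertices share a hyperedge. -/
def EdgesConnected (E : Finset (Finset α)) : Prop :=
  ∀ u v : α, (∃ f ∈ E, u ∈ f) → (∃ f ∈ E, v ∈ f) →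
    Relation.ReflTransGen (fun a b => ∃ f ∈ E, a ∈ f ∧ b ∈ f) u v

end FinHypergraph

/-- `D` is a good digraph of `H` if `D` is acyclic, `NH(D) = H`, and every hyperedge of
`H` contains at most one bud (degree-one vertex) whose in- and out-neighbour sets in `D`
are both nonempty. -/
def GoodDigraph {α : Type*} [DecidableEq α] (D : FinDigraph α) (H : FinHypergraph α) : Prop :=
  D.IsAcyclic ∧ D.verts = H.verts ∧ D.NH = H.edges ∧
    ∀ e ∈ H.edges,
      (e.filter fun v => H.degree v = 1 ∧ (D.inN v).Nonempty ∧ (D.outN v).Nonempty).card ≤ 1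

/-- Swapping the in- and out-neighbour sets of two non-adjacent vertices transposes the
two vertices in every hyperedge of the niche hypergraph. -/
theorem swap_niche_eq {α : Type*} [DecidableEq α]
    (D D'' : FinDigraph α) (hD : D.IsLegal) (hac : D.IsAcyclic)
    (u x : α) (hu : u ∈ D.verts) (hx : x ∈ D.verts)
    (hnadj1 : (u, x) ∉ D.arcs) (hnadj2 : (x, u) ∉ D.arcs)
    (hV : D''.verts = D.verts)
    (hA : ∀ a b : α, (a, b) ∈ D''.arcs ↔ (Equiv.swap u x a, Equiv.swap u x b) ∈ D.arcs) :
    D''.NH = D.NH.image fun e => e.image (Equiv.swap u x) := by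
  classical
  set σ := Equiv.swap u x with hσ
  have hσσ : ∀ a : α, σ (σ a) = a := fun a => Equiv.swap_apply_self u x a
  have hvmem : ∀ a : α, σ a ∈ D.verts ↔ a ∈ D.verts := by
    intro a
    rcases eq_or_ne a u with rfl | h1
    · simp [hσ, hu, hx]
    rcases eq_or_ne a x with rfl | h2
    · simp [hσ, hu, hx]
    · simp [hσ, Equiv.swap_apply_of_ne_of_ne h1 h2]
  have hin : ∀ v : α, D''.inN v = (D.inN (σ v)).image σ := by
    intro v
    ext a
    simp only [FinDigraph.inN, Finset.mem_image, Finset.mem_filter, hV]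
    constructor
    · rintro ⟨ha, harc⟩
      exact ⟨σ a, ⟨(hvmem a).mpr ha, (hA a v).mp harc⟩, hσσ a⟩
    · rintro ⟨b, ⟨hb, harc⟩, rfl⟩
      refine ⟨(hvmem b).mpr hb, ?_⟩
      rw [hA]
      simpa [hσσ] using harc
  have hout : ∀ v : α, D''.outN v = (D.outN (σ v)).image σ := by
    intro v
    ext a
    simp only [FinDigraph.outN, Finset.mem_image, Finset.mem_filter, hV]
    constructor
    · rintro ⟨ha, harc⟩
      exact ⟨σ a, ⟨(hvmem a).mpr ha, (hA v a).mp harc⟩, hσσ a⟩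
    · rintro ⟨b, ⟨hb, harc⟩, rfl⟩
      refine ⟨(hvmem b).mpr hb, ?_⟩
      rw [hA]
      simpa [hσσ] using harc
  have himin : D''.verts.image D''.inN = (D.verts.image D.inN).image fun e => e.image σ := by
    rw [hV, Finset.image_image]
    ext e
    simp only [Finset.mem_image, Function.comp_apply]
    constructor
    · rintro ⟨v, hv, rfl⟩
      exact ⟨σ v, (hvmem v).mpr hv, (hin v).symm⟩
    · rintro ⟨v, hv, rfl⟩
      exact ⟨σ v, (hvmem v).mpr hv, (hin (σ v)).trans (by rw [hσσ])⟩
  have himout : D''.verts.image D''.outN = (D.verts.image D.outN).image fun e => e.image σ := by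
    rw [hV, Finset.image_image]
    ext e
    simp only [Finset.mem_image, Function.comp_apply]
    constructor
    · rintro ⟨v, hv, rfl⟩
      exact ⟨σ v, (hvmem v).mpr hv, (hout v).symm⟩
    · rintro ⟨v, hv, rfl⟩
      exact ⟨σ v, (hvmem v).mpr hv, (hout (σ v)).trans (by rw [hσσ])⟩
  have hcard : ∀ e : Finset α, (e.image σ).card = e.card := fun e =>
    Finset.card_image_of_injective e σ.injective
  unfold FinDigraph.NH
  rw [himin, himout, ← Finset.image_union, Finset.filter_image]
  congr 1
  ext e
  simp [hcard]
end

section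
/- Let D1 and D2 be digraphs whose vertex sets intersect in exactly one vertex u, and let D be their union (V(D) = V(D1) ∪ V(D2), A(D) = A(D1) ∪ A(D2)). If N⁻_{D1}(u) = ∅ and N⁺_{D2}(u) = ∅, then the hyperedge set of the niche hypergraph of D is the union of the hyperedge sets of the niche hypergraphs of D1 and D2. -/
/-- For two digraphs sharing exactly one vertex `u`, with `u` a source in the first and
a sink in the second, the niche hypergraph of the union is the union of the niche
hypergraphs. -/
theorem union_niche_eq {α : Type*} [DecidableEq α]
    (D1 D2 D : FinDigraph α) (h1 : D1.IsLegal) (h2 : D2.IsLegal) (u : α)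
    (hint : D1.verts ∩ D2.verts = {u})
    (hin : D1.inN u = ∅) (hout : D2.outN u = ∅)
    (hV : D.verts = D1.verts ∪ D2.verts) (hA : D.arcs = D1.arcs ∪ D2.arcs) :
    D.NH = D1.NH ∪ D2.NH := by
  classical
  have hmem : ∀ v, v ∈ D1.verts → v ∈ D2.verts → v = u := by
    intro v hv1 hv2
    have : v ∈ D1.verts ∩ D2.verts := Finset.mem_inter.2 ⟨hv1, hv2⟩
    rwa [hint, Finset.mem_singleton] at this
  have hu : u ∈ D1.verts ∩ D2.verts := by
    rw [hint]; exact Finset.mem_singleton_self u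
  have hu1 : u ∈ D1.verts := (Finset.mem_inter.1 hu).1
  have hu2 : u ∈ D2.verts := (Finset.mem_inter.1 hu).2
  -- empty neighbourhoods outside vertex sets
  have hin1 : ∀ v, v ∉ D1.verts → D1.inN v = ∅ := by
    intro v hv
    ext w
    simp only [FinDigraph.inN, Finset.mem_filter, Finset.notMem_empty, iff_false, not_and]
    exact fun _ harc => absurd ((h1.1 _ harc).2.1) hv
  have hout1 : ∀ v, v ∉ D1.verts → D1.outN v = ∅ := by
    intro v hv
    ext w
    simp only [FinDigraph.outN, Finset.mem_filter, Finset.notMem_empty, iff_false, not_and]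
    exact fun _ harc => absurd ((h1.1 _ harc).1) hv
  have hin2 : ∀ v, v ∉ D2.verts → D2.inN v = ∅ := by
    intro v hv
    ext w
    simp only [FinDigraph.inN, Finset.mem_filter, Finset.notMem_empty, iff_false, not_and]
    exact fun _ harc => absurd ((h2.1 _ harc).2.1) hv
  have hout2 : ∀ v, v ∉ D2.verts → D2.outN v = ∅ := by
    intro v hv
    ext w
    simp only [FinDigraph.outN, Finset.mem_filter, Finset.notMem_empty, iff_false, not_and]
    exact fun _ harc => absurd ((h2.1 _ harc).1) hv
  -- union decomposition
  have hinU : ∀ v, D.inN v = D1.inN v ∪ D2.inN v := by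
    intro v
    ext w
    simp only [FinDigraph.inN, Finset.mem_union, Finset.mem_filter, hV, hA]
    constructor
    · rintro ⟨hw, harc | harc⟩
      · exact Or.inl ⟨(h1.1 _ harc).1, harc⟩
      · exact Or.inr ⟨(h2.1 _ harc).1, harc⟩
    · rintro (⟨hw, harc⟩ | ⟨hw, harc⟩)
      exacts [⟨Or.inl hw, Or.inl harc⟩,
        ⟨Or.inr hw, Or.inr harc⟩]
  have houtU : ∀ v, D.outN v = D1.outN v ∪ D2.outN v := by
    intro v
    ext w
    simp only [FinDigraph.outN, Finset.mem_union, Finset.mem_filter, hV, hA]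
    constructor
    · rintro ⟨hw, harc | harc⟩
      · exact Or.inl ⟨(h1.1 _ harc).2.1, harc⟩
      · exact Or.inr ⟨(h2.1 _ harc).2.1, harc⟩
    · rintro (⟨hw, harc⟩ | ⟨hw, harc⟩)
      exacts [⟨Or.inl hw, Or.inl harc⟩,
        ⟨Or.inr hw, Or.inr harc⟩]
  -- key identifications
  have keyOut1 : ∀ v ∈ D1.verts, D.outN v = D1.outN v := by
    intro v hv
    have h2e : D2.outN v = ∅ := by
      by_cases hv2 : v ∈ D2.verts
      · rw [hmem v hv hv2]; exact hout
      · exact hout2 v hv2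
    rw [houtU, h2e, Finset.union_empty]
  have keyIn2 : ∀ v ∈ D2.verts, D.inN v = D2.inN v := by
    intro v hv
    have h1e : D1.inN v = ∅ := by
      by_cases hv1 : v ∈ D1.verts
      · rw [hmem v hv1 hv]; exact hin
      · exact hin1 v hv1
    rw [hinU, h1e, Finset.empty_union]
  have keyIn1 : ∀ v ∈ D1.verts, v ≠ u → D.inN v = D1.inN v := by
    intro v hv hne
    have hv2 : v ∉ D2.verts := fun hv2 => hne (hmem v hv hv2)
    rw [hinU, hin2 v hv2, Finset.union_empty]
  have keyOut2 : ∀ v ∈ D2.verts, v ≠ u → D.outN v = D2.outN v := by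
    intro v hv hne
    have hv1 : v ∉ D1.verts := fun hv1 => hne (hmem v hv1 hv)
    rw [houtU, hout1 v hv1, Finset.empty_union]
  ext e
  simp only [FinDigraph.NH, Finset.mem_union, Finset.mem_filter, Finset.mem_image, hV,
    Finset.mem_union]
  constructor
  · rintro ⟨(⟨v, hv, rfl⟩ | ⟨v, hv, rfl⟩), hcard⟩
    · rcases hv with hv1 | hv2
      · by_cases hv2 : v ∈ D2.verts
        · refine Or.inr ⟨Or.inl ⟨v, hv2, ?_⟩, hcard⟩
          exact (keyIn2 v hv2).symm
        · have hne : v ≠ u := fun h => hv2 (h ▸ hu2)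
          exact Or.inl ⟨Or.inl ⟨v, hv1, (keyIn1 v hv1 hne).symm⟩, hcard⟩
      · exact Or.inr ⟨Or.inl ⟨v, hv2, (keyIn2 v hv2).symm⟩, hcard⟩
    · rcases hv with hv1 | hv2
      · exact Or.inl ⟨Or.inr ⟨v, hv1, (keyOut1 v hv1).symm⟩, hcard⟩
      · by_cases hv1 : v ∈ D1.verts
        · exact Or.inl ⟨Or.inr ⟨v, hv1, (keyOut1 v hv1).symm⟩, hcard⟩
        · have hne : v ≠ u := fun h => hv1 (h ▸ hu1)
          exact Or.inr ⟨Or.inr ⟨v, hv2, (keyOut2 v hv2 hne).symm⟩, hcard⟩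
  · rintro (⟨(⟨v, hv, rfl⟩ | ⟨v, hv, rfl⟩), hcard⟩ | ⟨(⟨v, hv, rfl⟩ | ⟨v, hv, rfl⟩), hcard⟩)
    · have hne : v ≠ u := by
        rintro rfl
        rw [hin] at hcard
        simp at hcard
      exact ⟨Or.inl ⟨v, Or.inl hv, keyIn1 v hv hne⟩, hcard⟩
    · exact ⟨Or.inr ⟨v, Or.inl hv, keyOut1 v hv⟩, hcard⟩
    · exact ⟨Or.inl ⟨v, Or.inr hv, keyIn2 v hv⟩, hcard⟩
    · have hne : v ≠ u := by
        rintro rfl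
        rw [hout] at hcard
        simp at hcard
      exact ⟨Or.inr ⟨v, Or.inr hv, keyOut2 v hv hne⟩, hcard⟩
end

section
/- Let H be a hypergraph with rank r (every hyperedge has at most r vertices) such that H together with some finite number of isolated vertices is the niche hypergraph of an acyclic digraph. Then the maximum degree of H satisfies Δ(H) ≤ 2r. -/
/-- If a hypergraph of rank `r` (plus finitely many isolated vertices) is the niche
hypergraph of an acyclic digraph, then its maximum degree is at most `2r`. -/
theorem maxDegree_le_two_mul_rank {α : Type*} [DecidableEq α]
    (H : FinHypergraph α) (r : ℕ) (hr : ∀ e ∈ H.edges, e.card ≤ r)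
    (D : FinDigraph α) (hleg : D.IsLegal) (hac : D.IsAcyclic)
    (hsub : H.verts ⊆ D.verts) (hNH : D.NH = H.edges) :
    ∀ v : α, H.degree v ≤ 2 * r := by
  intro v
  unfold FinHypergraph.degree
  rcases Finset.eq_empty_or_nonempty (H.edges.filter fun e => v ∈ e) with h0 | h0
  · simp [h0]
  obtain ⟨e0, he0⟩ := h0
  rw [Finset.mem_filter] at he0
  have hr2 : 2 ≤ r := le_trans (H.edge_card e0 he0.1) (hr e0 he0.1)
  -- bound on in/out neighbourhoods of v
  have key : ∀ s : Finset α, (s = D.inN v ∨ s = D.outN v) → s.card ≤ r := by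
    intro s hs
    rcases le_or_gt s.card 1 with h1 | h1
    · omega
    · have hvverts : v ∈ D.verts := by
        have : s.Nonempty := Finset.card_pos.mp (by omega)
        obtain ⟨u, hu⟩ := this
        rcases hs with rfl | rfl
        · have := Finset.mem_filter.mp hu
          exact (hleg.1 _ this.2).2.1
        · have := Finset.mem_filter.mp hu
          exact (hleg.1 _ this.2).1
      have hsNH : s ∈ D.NH := by
        rw [FinDigraph.NH, Finset.mem_filter, Finset.mem_union]
        refine ⟨?_, h1⟩
        rcases hs with rfl | rfl
        · exact Or.inl (Finset.mem_image_of_mem _ hvverts)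
        · exact Or.inr (Finset.mem_image_of_mem _ hvverts)
      rw [hNH] at hsNH
      exact hr s hsNH
  have hsubimg : (H.edges.filter fun e => v ∈ e) ⊆
      ((D.inN v).image D.outN) ∪ ((D.outN v).image D.inN) := by
    intro e he
    rw [Finset.mem_filter] at he
    have heNH : e ∈ D.NH := by rw [hNH]; exact he.1
    rw [FinDigraph.NH, Finset.mem_filter, Finset.mem_union] at heNH
    rcases heNH.1 with h | h
    · obtain ⟨w, hw, rfl⟩ := Finset.mem_image.mp h
      have hv := Finset.mem_filter.mp he.2
      refine Finset.mem_union_right _ (Finset.mem_image_of_mem _ ?_)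
      rw [FinDigraph.outN, Finset.mem_filter]
      exact ⟨hw, hv.2⟩
    · obtain ⟨w, hw, rfl⟩ := Finset.mem_image.mp h
      have hv := Finset.mem_filter.mp he.2
      refine Finset.mem_union_left _ (Finset.mem_image_of_mem _ ?_)
      rw [FinDigraph.inN, Finset.mem_filter]
      exact ⟨hw, hv.2⟩
  calc (H.edges.filter fun e => v ∈ e).card
      ≤ (((D.inN v).image D.outN) ∪ ((D.outN v).image D.inN)).card :=
        Finset.card_le_card hsubimg
    _ ≤ ((D.inN v).image D.outN).card + ((D.outN v).image D.inN).card :=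
        Finset.card_union_le _ _
    _ ≤ (D.inN v).card + (D.outN v).card :=
        Nat.add_le_add (Finset.card_image_le) (Finset.card_image_le)
    _ ≤ r + r := Nat.add_le_add (key _ (Or.inl rfl)) (key _ (Or.inr rfl))
    _ = 2 * r := by ring
end

section
/- Let H be a hypernova with m ≥ 3 hyperedges, i.e., a hypergraph whose m hyperedges pairwise intersect in exactly the single common vertex x, each hyperedge having at least 2 vertices. Then for every finite k, H together with k isolated vertices is not the niche hypergraph of any acyclic digraph; that is, the niche number of H is infinite. -/
/-- A hypernova with at least three hyperedges, pairwise intersecting in exactly the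
common vertex `x`, has infinite niche number: no addition of isolated vertices makes it
the niche hypergraph of an acyclic digraph. -/
theorem hypernova_niche_infinite {α : Type*} [DecidableEq α]
    (H : FinHypergraph α) (x : α) (hm : 3 ≤ H.edges.card)
    (hstar : ∀ e ∈ H.edges, ∀ f ∈ H.edges, e ≠ f → e ∩ f = {x}) :
    ¬ ∃ D : FinDigraph α, D.IsLegal ∧ D.IsAcyclic ∧ H.verts ⊆ D.verts ∧
        D.NH = H.edges := by
  rintro ⟨D, hleg, hac, hsub, hNH⟩
  -- every edge contains x
  have hx : ∀ e ∈ H.edges, x ∈ e := by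
    intro e he
    obtain ⟨f, hf, hfe⟩ : ∃ f ∈ H.edges, f ≠ e := by
      obtain ⟨a, ha, b, hb, hab⟩ := Finset.one_lt_card.mp (by omega : 1 < H.edges.card)
      by_cases hae : a = e
      · exact ⟨b, hb, by rw [← hae]; exact hab.symm⟩
      · exact ⟨a, ha, hae⟩
    have h1 := hstar e he f hf (Ne.symm hfe)
    have h2 : x ∈ e ∩ f := h1 ▸ Finset.mem_singleton_self x
    exact (Finset.mem_inter.mp h2).1
  -- each edge is an in- or out-neighbourhood
  have hrep : ∀ e ∈ H.edges, ∃ v ∈ D.verts, e = D.inN v ∨ e = D.outN v := by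
    intro e he
    rw [← hNH] at he
    unfold FinDigraph.NH at he
    rw [Finset.mem_filter, Finset.mem_union] at he
    rcases he.1 with h | h <;> obtain ⟨v, hv, rfl⟩ := Finset.mem_image.mp h
    · exact ⟨v, hv, Or.inl rfl⟩
    · exact ⟨v, hv, Or.inr rfl⟩
  obtain ⟨e0, he0⟩ := Finset.card_pos.mp (by omega : 0 < H.edges.card)
  have hxD : x ∈ D.verts := hsub (H.edge_sub e0 he0 (hx e0 he0))
  -- if a neighbourhood of x has two elements, it is an edge, contradiction
  have hbig : ∀ s : Finset α, (s = D.inN x ∨ s = D.outN x) → 2 ≤ s.card → False := by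
    intro s hs hcard
    have hmem : s ∈ D.NH := by
      unfold FinDigraph.NH
      refine Finset.mem_filter.mpr ⟨Finset.mem_union.mpr ?_, hcard⟩
      rcases hs with rfl | rfl
      · exact Or.inl (Finset.mem_image_of_mem _ hxD)
      · exact Or.inr (Finset.mem_image_of_mem _ hxD)
    rw [hNH] at hmem
    have hxs := hx s hmem
    rcases hs with rfl | rfl <;>
      exact (hleg.1 _ (Finset.mem_filter.mp hxs).2).2.2 rfl
  -- two distinct edges with the same direction give a contradiction
  have keyIn : ∀ e ∈ H.edges, ∀ f ∈ H.edges, e ≠ f →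
      ∀ v w : α, v ∈ D.verts → w ∈ D.verts → e = D.inN v → f = D.inN w → False := by
    intro e he f hf hef v w hv hw hev hfw
    have hvw : v ≠ w := by rintro rfl; exact hef (hev.trans hfw.symm)
    have hxv : (x, v) ∈ D.arcs := by
      have := hx e he; rw [hev] at this; exact (Finset.mem_filter.mp this).2
    have hxw : (x, w) ∈ D.arcs := by
      have := hx f hf; rw [hfw] at this; exact (Finset.mem_filter.mp this).2
    refine hbig (D.outN x) (Or.inr rfl) (Finset.one_lt_card.mpr
      ⟨v, Finset.mem_filter.mpr ⟨hv, hxv⟩, w, Finset.mem_filter.mpr ⟨hw, hxw⟩, hvw⟩)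
  have keyOut : ∀ e ∈ H.edges, ∀ f ∈ H.edges, e ≠ f →
      ∀ v w : α, v ∈ D.verts → w ∈ D.verts → e = D.outN v → f = D.outN w → False := by
    intro e he f hf hef v w hv hw hev hfw
    have hvw : v ≠ w := by rintro rfl; exact hef (hev.trans hfw.symm)
    have hxv : (v, x) ∈ D.arcs := by
      have := hx e he; rw [hev] at this; exact (Finset.mem_filter.mp this).2
    have hxw : (w, x) ∈ D.arcs := by
      have := hx f hf; rw [hfw] at this; exact (Finset.mem_filter.mp this).2
    refine hbig (D.inN x) (Or.inl rfl) (Finset.one_lt_card.mpr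
      ⟨v, Finset.mem_filter.mpr ⟨hv, hxv⟩, w, Finset.mem_filter.mpr ⟨hw, hxw⟩, hvw⟩)
  -- get three distinct edges and pigeonhole on direction
  obtain ⟨e1, he1, e2, he2, e3, he3, h12, h13, h23⟩ :=
    Finset.two_lt_card.mp (by omega : 2 < H.edges.card)
  obtain ⟨v1, hv1, h1⟩ := hrep e1 he1
  obtain ⟨v2, hv2, h2⟩ := hrep e2 he2
  obtain ⟨v3, hv3, h3⟩ := hrep e3 he3
  rcases h1 with h1 | h1 <;> rcases h2 with h2 | h2 <;> rcases h3 with h3 | h3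
  · exact keyIn e1 he1 e2 he2 h12 v1 v2 hv1 hv2 h1 h2
  · exact keyIn e1 he1 e2 he2 h12 v1 v2 hv1 hv2 h1 h2
  · exact keyIn e1 he1 e3 he3 h13 v1 v3 hv1 hv3 h1 h3
  · exact keyOut e2 he2 e3 he3 h23 v2 v3 hv2 hv3 h2 h3
  · exact keyIn e2 he2 e3 he3 h23 v2 v3 hv2 hv3 h2 h3
  · exact keyOut e1 he1 e3 he3 h13 v1 v3 hv1 hv3 h1 h3
  · exact keyOut e1 he1 e2 he2 h12 v1 v2 hv1 hv2 h1 h2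
  · exact keyOut e1 he1 e2 he2 h12 v1 v2 hv1 hv2 h1 h2
end

section
/- For every r ≥ 3 and every s with 3 ≤ s ≤ 2r, there exists an r-uniform linear hypertree H with maximum degree Δ(H) = s whose niche number is 0, i.e., H itself (with no added isolated vertices) is the niche hypergraph of some acyclic digraph. -/
section NicheAux

open SimpleGraph


theorem parentTree_meas_le {V : Type*} (f : V → V) (meas : V → ℕ) (root : V)
    (hroot : f root = root) (hdec : ∀ v, v ≠ root → meas (f v) < meas v) :
    ∀ (k : ℕ) (x : V), meas (f^[k] x) ≤ meas x := by
  intro k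
  induction k with
  | zero => intro x; simp
  | succ k ih =>
    intro x
    rw [Function.iterate_succ_apply]
    refine (ih (f x)).trans ?_
    by_cases hx : x = root
    · subst hx; rw [hroot]
    · exact (hdec x hx).le

theorem parentTree_isTree {V : Type*} [DecidableEq V] (f : V → V) (meas : V → ℕ) (root : V)
    (hroot : f root = root) (hdec : ∀ v, v ≠ root → meas (f v) < meas v) :
    (SimpleGraph.fromRel fun a b => f a = b).IsTree := by
  set G := SimpleGraph.fromRel fun a b => f a = b with hG
  have hadj : ∀ a b, G.Adj a b ↔ a ≠ b ∧ (f a = b ∨ f b = a) := by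
    intro a b; rw [hG]; simp [SimpleGraph.fromRel_adj]
  have hconn : G.Connected := by
    have hreach : ∀ n (v : V), meas v = n → G.Reachable v root := by
      intro n
      induction n using Nat.strong_induction_on with
      | _ n ih =>
        intro v hn
        by_cases hv : v = root
        · subst hv; exact Reachable.refl _
        · have hlt : meas (f v) < meas v := hdec v hv
          have hne : v ≠ f v := by
            intro h; rw [← h] at hlt; omega
          have : G.Adj v (f v) := (hadj v (f v)).2 ⟨hne, Or.inl rfl⟩
          exact this.reachable.trans (ih (meas (f v)) (hn ▸ hlt) (f v) rfl)
    rw [connected_iff]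
    exact ⟨fun u v => (hreach _ u rfl).trans (hreach _ v rfl).symm, ⟨root⟩⟩
  -- key: deleting an edge {v, f v} disconnects v from f v
  have key : ∀ v : V, v ≠ f v → ¬(G \ fromEdgeSet {s(v, f v)}).Reachable v (f v) := by
    intro v hv
    set D : V → Prop := fun x => ∃ k, f^[k] x = v with hD
    have hvD : D v := ⟨0, rfl⟩
    have hvroot : v ≠ root := by
      intro h; rw [h, hroot] at hv; exact hv rfl
    have hfvD : ¬ D (f v) := by
      rintro ⟨k, hk⟩
      have h1 : meas (f^[k] (f v)) ≤ meas (f v) :=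
        parentTree_meas_le f meas root hroot hdec k (f v)
      rw [hk] at h1
      have := hdec v hvroot
      omega
    -- edges of the deleted graph preserve D
    have hpres : ∀ x y : V, (G \ fromEdgeSet {s(v, f v)}).Adj x y → (D x ↔ D y) := by
      have main : ∀ x : V, x ≠ v → (D x ↔ D (f x)) := by
        intro x hx
        constructor
        · rintro ⟨k, hk⟩
          cases k with
          | zero => exact absurd hk hx
          | succ k => exact ⟨k, by rwa [Function.iterate_succ_apply] at hk⟩
        · rintro ⟨k, hk⟩
          exact ⟨k + 1, by rwa [Function.iterate_succ_apply]⟩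
      intro x y hxy
      rw [SimpleGraph.sdiff_adj, fromEdgeSet_adj] at hxy
      obtain ⟨hxy1, hxy2⟩ := hxy
      have hne : x ≠ y := hxy1.ne
      have hnotedge : s(x, y) ≠ s(v, f v) := by
        intro h; exact hxy2 ⟨h, hne⟩
      rcases ((hadj x y).1 hxy1).2 with h | h
      · -- f x = y
        have hxv : x ≠ v := by
          rintro rfl; exact hnotedge (by rw [h])
        rw [← h]; exact main x hxv
      · -- f y = x
        have hyv : y ≠ v := by
          rintro rfl; exact hnotedge (by rw [h, Sym2.eq_swap])
        rw [← h]; exact (main y hyv).symm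
    rintro ⟨w⟩
    have hwpres : ∀ {x y : V} (w : (G \ fromEdgeSet {s(v, f v)}).Walk x y), (D x ↔ D y) := by
      intro x y w
      induction w with
      | nil => exact Iff.rfl
      | cons h p ih => exact (hpres _ _ h).trans ih
    exact hfvD ((hwpres w).1 hvD)
  constructor
  · exact hconn
  · rw [isAcyclic_iff_forall_adj_isBridge]
    intro a b hab
    rw [isBridge_iff]
    have hne := hab.ne
    rcases ((hadj a b).1 hab).2 with h | h
    · rw [← h]
      exact key a (by rw [h]; exact hne)
    · rw [Sym2.eq_swap, ← h]
      intro hr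
      exact key b (by rw [h]; exact hne.symm) hr.symm


namespace NicheNum

/-- number of "in-realized" edges through the hub -/
def pp (r s : ℕ) : ℕ := min (s-1) r
/-- number of "out-realized" edges through the hub -/
def qq (r s : ℕ) : ℕ := s - pp r s
/-- the i-th block of filler vertices, i = 1..s -/
def blk (r i : ℕ) : Finset ℕ := Finset.Icc (2*r + (i-1)*(r-1) + 1) (2*r + i*(r-1))
/-- largest vertex -/
def NN (r s : ℕ) : ℕ := 2*r + s*(r-1)
def HV (r s : ℕ) : Finset ℕ := Finset.range (NN r s + 1)
def HE (r s : ℕ) : Finset (Finset ℕ) :=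
  insert (Finset.Icc 1 r) (insert (Finset.Icc (r+1) (2*r))
    ((Finset.Icc 1 s).image fun i => insert 0 (blk r i)))
def DA (r s : ℕ) : Finset (ℕ × ℕ) :=
  (((Finset.Icc 1 r).image fun t => ((0:ℕ), t)) ∪
   ((Finset.Icc (r+1) (2*r)).image fun t => (t, (0:ℕ)))) ∪
  (((Finset.Icc 1 (pp r s)).biUnion fun i => (blk r i).image fun u => (u, i)) ∪
   ((Finset.Icc 1 (qq r s)).biUnion fun j => (blk r (pp r s + j)).image fun u => (r+j, u)))

section Basic
variable {r s : ℕ}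

lemma pq_facts (hr : 3 ≤ r) (hs1 : 3 ≤ s) (hs2 : s ≤ 2*r) :
    2 ≤ pp r s ∧ pp r s ≤ r ∧ 1 ≤ qq r s ∧ qq r s ≤ r ∧ pp r s + qq r s = s ∧ pp r s ≤ s - 1 := by
  simp only [pp, qq]; omega

lemma mem_blk {u i : ℕ} : u ∈ blk r i ↔ 2*r + (i-1)*(r-1) + 1 ≤ u ∧ u ≤ 2*r + i*(r-1) := by
  simp [blk, Finset.mem_Icc]

lemma blk_lb {u i : ℕ} (hu : u ∈ blk r i) : 2*r + 1 ≤ u := by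
  rw [mem_blk] at hu; omega

lemma blk_ub {u i : ℕ} (hi : i ≤ s) (hu : u ∈ blk r i) : u ≤ NN r s := by
  rw [mem_blk] at hu
  have : i * (r-1) ≤ s * (r-1) := Nat.mul_le_mul_right _ hi
  unfold NN; omega

lemma blk_disj {u i j : ℕ} (hij : i < j) (hi : 1 ≤ i) (hr : 2 ≤ r)
    (h1 : u ∈ blk r i) (h2 : u ∈ blk r j) : False := by
  rw [mem_blk] at h1 h2
  have h3 : i * (r-1) ≤ (j-1) * (r-1) := Nat.mul_le_mul_right _ (by omega)
  omega

lemma blk_eq_of_mem {u i j : ℕ} (hi : 1 ≤ i) (hj : 1 ≤ j) (hr : 2 ≤ r)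
    (h1 : u ∈ blk r i) (h2 : u ∈ blk r j) : i = j := by
  rcases Nat.lt_trichotomy i j with h | h | h
  · exact absurd (blk_disj h hi hr h1 h2) not_false
  · exact h
  · exact absurd (blk_disj h hj hr h2 h1) not_false

lemma blk_card (hr : 1 ≤ r) {i : ℕ} (hi : 1 ≤ i) : (blk r i).card = r - 1 := by
  rw [blk, Nat.card_Icc]
  obtain ⟨k, rfl⟩ : ∃ k, i = k + 1 := ⟨i - 1, by omega⟩
  simp [Nat.succ_sub_one, Nat.succ_mul]
  omega

lemma blk_cover (hr : 2 ≤ r) : ∀ (n v : ℕ), 2*r+1 ≤ v → v ≤ 2*r + n*(r-1) →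
    ∃ i, 1 ≤ i ∧ i ≤ n ∧ v ∈ blk r i := by
  intro n
  induction n with
  | zero => intro v h1 h2; omega
  | succ n ih =>
    intro v h1 h2
    by_cases h : v ≤ 2*r + n*(r-1)
    · obtain ⟨i, hi1, hi2, hi3⟩ := ih v h1 h
      exact ⟨i, hi1, by omega, hi3⟩
    · rw [add_one_mul] at h2
      refine ⟨n+1, by omega, le_refl _, ?_⟩
      rw [mem_blk]
      simp only [Nat.add_sub_cancel, add_one_mul]
      omega

lemma zero_not_mem_blk {i : ℕ} (hr : 1 ≤ r) : (0:ℕ) ∉ blk r i := by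
  intro h; have := blk_lb h; omega

lemma mem_DA {a b : ℕ} : (a, b) ∈ DA r s ↔
    (a = 0 ∧ 1 ≤ b ∧ b ≤ r) ∨ (r+1 ≤ a ∧ a ≤ 2*r ∧ b = 0) ∨
    (∃ i, 1 ≤ i ∧ i ≤ pp r s ∧ a ∈ blk r i ∧ b = i) ∨
    (∃ j, 1 ≤ j ∧ j ≤ qq r s ∧ a = r + j ∧ b ∈ blk r (pp r s + j)) := by
  simp only [DA, Finset.mem_union, Finset.mem_image, Finset.mem_biUnion, Finset.mem_Icc,
    Prod.mk.injEq]
  constructor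
  · rintro ((⟨t, ht, h1, h2⟩ | ⟨t, ht, h1, h2⟩) | (⟨i, hi, u, hu, h1, h2⟩ | ⟨j, hj, u, hu, h1, h2⟩))
    · exact Or.inl ⟨h1.symm, by omega⟩
    · exact Or.inr (Or.inl ⟨by omega, by omega, h2.symm⟩)
    · exact Or.inr (Or.inr (Or.inl ⟨i, hi.1, hi.2, h1 ▸ hu, h2.symm⟩))
    · exact Or.inr (Or.inr (Or.inr ⟨j, hj.1, hj.2, h1.symm, h2 ▸ hu⟩))
  · rintro (⟨h1, h2⟩ | ⟨h1, h2, h3⟩ | ⟨i, hi1, hi2, hi3, hi4⟩ | ⟨j, hj1, hj2, hj3, hj4⟩)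
    · exact Or.inl (Or.inl ⟨b, by omega, h1.symm, rfl⟩)
    · exact Or.inl (Or.inr ⟨a, by omega, rfl, h3.symm⟩)
    · exact Or.inr (Or.inl ⟨i, ⟨hi1, hi2⟩, a, hi3, rfl, hi4.symm⟩)
    · exact Or.inr (Or.inr ⟨j, ⟨hj1, hj2⟩, b, hj4, hj3.symm, rfl⟩)

/-- coarse classification of arcs -/
lemma DA_bounds (hr : 3 ≤ r) (hs1 : 3 ≤ s) (hs2 : s ≤ 2*r) {a b : ℕ} (h : (a, b) ∈ DA r s) :
    (a = 0 ∧ 1 ≤ b ∧ b ≤ r) ∨ (r+1 ≤ a ∧ a ≤ 2*r ∧ b = 0) ∨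
    (2*r+1 ≤ a ∧ 1 ≤ b ∧ b ≤ r) ∨ (r+1 ≤ a ∧ a ≤ 2*r ∧ 2*r+1 ≤ b) := by
  obtain ⟨hp2, hpr, hq1, hqr, hpq, hps⟩ := pq_facts hr hs1 hs2
  rw [mem_DA] at h
  rcases h with h | h | ⟨i, h1, h2, h3, h4⟩ | ⟨j, h1, h2, h3, h4⟩
  · exact Or.inl h
  · exact Or.inr (Or.inl h)
  · exact Or.inr (Or.inr (Or.inl ⟨blk_lb h3, by omega⟩))
  · exact Or.inr (Or.inr (Or.inr ⟨by omega, by omega, blk_lb h4⟩))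

lemma DA_sub_verts (hr : 3 ≤ r) (hs1 : 3 ≤ s) (hs2 : s ≤ 2*r) {a b : ℕ}
    (h : (a, b) ∈ DA r s) : a ∈ HV r s ∧ b ∈ HV r s := by
  obtain ⟨hp2, hpr, hq1, hqr, hpq, hps⟩ := pq_facts hr hs1 hs2
  have hN : 2*r ≤ NN r s := by unfold NN; omega
  simp only [HV, Finset.mem_range]
  rw [mem_DA] at h
  rcases h with ⟨h1, h2, h3⟩ | ⟨h1, h2, h3⟩ | ⟨i, h1, h2, h3, h4⟩ | ⟨j, h1, h2, h3, h4⟩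
  · omega
  · omega
  · have := blk_ub (s := s) (by omega) h3; omega
  · have := blk_ub (s := s) (show pp r s + j ≤ s by omega) h4; omega

end Basic
end NicheNum

namespace NicheNum
def DD (r s : ℕ) : FinDigraph ℕ := ⟨HV r s, DA r s⟩

section Nbhd
variable {r s : ℕ} (hr : 3 ≤ r) (hs1 : 3 ≤ s) (hs2 : s ≤ 2*r)
include hr hs1 hs2

lemma NN_ge : 2*r ≤ NN r s := by unfold NN; omega

lemma mem_HV {m : ℕ} : m ∈ HV r s ↔ m ≤ NN r s := by
  simp [HV, Finset.mem_range]

lemma outN_zero : (DD r s).outN 0 = Finset.Icc 1 r := by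
  have hN := NN_ge hr hs1 hs2
  ext u
  simp only [FinDigraph.outN, Finset.mem_filter]
  simp only [FinDigraph.outN, DD, Finset.mem_filter, Finset.mem_Icc, HV, Finset.mem_range]
  constructor
  · rintro ⟨h1, h2⟩
    rw [mem_DA] at h2
    rcases h2 with ⟨_, h⟩ | ⟨h, _⟩ | ⟨i, _, _, h, _⟩ | ⟨j, _, _, h, _⟩
    · exact h
    · omega
    · have := blk_lb h; omega
    · omega
  · intro h
    exact ⟨by omega, mem_DA.2 (Or.inl ⟨rfl, h⟩)⟩

lemma inN_zero : (DD r s).inN 0 = Finset.Icc (r+1) (2*r) := by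
  have hN := NN_ge hr hs1 hs2
  ext u
  simp only [FinDigraph.inN, Finset.mem_filter]
  simp only [FinDigraph.inN, DD, Finset.mem_filter, Finset.mem_Icc, HV, Finset.mem_range]
  constructor
  · rintro ⟨h1, h2⟩
    rw [mem_DA] at h2
    rcases h2 with ⟨_, h, _⟩ | ⟨h1, h2, _⟩ | ⟨i, hi, _, _, h⟩ | ⟨j, _, _, _, h⟩
    · omega
    · omega
    · omega
    · have := blk_lb h; omega
  · intro h
    exact ⟨by omega, mem_DA.2 (Or.inr (Or.inl ⟨h.1, h.2, rfl⟩))⟩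

lemma inN_apex {m : ℕ} (hm1 : 1 ≤ m) (hm2 : m ≤ pp r s) :
    (DD r s).inN m = insert 0 (blk r m) := by
  obtain ⟨hp2, hpr, hq1, hqr, hpq, hps⟩ := pq_facts hr hs1 hs2
  have hN := NN_ge hr hs1 hs2
  ext u
  simp only [FinDigraph.inN, Finset.mem_filter]
  simp only [FinDigraph.inN, DD, Finset.mem_filter, Finset.mem_insert, HV, Finset.mem_range]
  constructor
  · rintro ⟨h1, h2⟩
    rw [mem_DA] at h2
    rcases h2 with ⟨h, _⟩ | ⟨_, _, h⟩ | ⟨i, _, _, h, rfl⟩ | ⟨j, _, _, _, h⟩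
    · exact Or.inl h
    · omega
    · exact Or.inr h
    · have := blk_lb h; omega
  · rintro (rfl | h)
    · exact ⟨by omega, mem_DA.2 (Or.inl ⟨rfl, by omega⟩)⟩
    · refine ⟨by have := blk_ub (s := s) (by omega) h; omega,
        mem_DA.2 (Or.inr (Or.inr (Or.inl ⟨m, hm1, hm2, h, rfl⟩)))⟩

lemma inN_pad {m : ℕ} (hm1 : pp r s + 1 ≤ m) (hm2 : m ≤ r) :
    (DD r s).inN m = {0} := by
  have hN := NN_ge hr hs1 hs2
  ext u
  simp only [FinDigraph.inN, Finset.mem_filter]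
  simp only [FinDigraph.inN, DD, Finset.mem_filter, Finset.mem_singleton, HV, Finset.mem_range]
  constructor
  · rintro ⟨h1, h2⟩
    rw [mem_DA] at h2
    rcases h2 with ⟨h, _⟩ | ⟨_, _, h⟩ | ⟨i, _, hi, _, rfl⟩ | ⟨j, _, _, _, h⟩
    · exact h
    · omega
    · omega
    · have := blk_lb h; omega
  · rintro rfl
    exact ⟨by omega, mem_DA.2 (Or.inl ⟨rfl, by omega⟩)⟩

lemma outN_low {m : ℕ} (hm1 : 1 ≤ m) (hm2 : m ≤ r) : (DD r s).outN m = ∅ := by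
  ext u
  simp only [FinDigraph.outN, Finset.mem_filter]
  simp only [FinDigraph.outN, DD, Finset.mem_filter, Finset.notMem_empty, iff_false,
    not_and]
  intro _ h2
  rw [mem_DA] at h2
  rcases h2 with ⟨h, _⟩ | ⟨h, _⟩ | ⟨i, _, _, h, _⟩ | ⟨j, hj, _, h, _⟩
  · omega
  · omega
  · have := blk_lb h; omega
  · omega

lemma outN_apex {j : ℕ} (hj1 : 1 ≤ j) (hj2 : j ≤ qq r s) :
    (DD r s).outN (r+j) = insert 0 (blk r (pp r s + j)) := by
  obtain ⟨hp2, hpr, hq1, hqr, hpq, hps⟩ := pq_facts hr hs1 hs2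
  have hN := NN_ge hr hs1 hs2
  ext u
  simp only [FinDigraph.outN, Finset.mem_filter]
  simp only [FinDigraph.outN, DD, Finset.mem_filter, Finset.mem_insert, HV, Finset.mem_range]
  constructor
  · rintro ⟨h1, h2⟩
    rw [mem_DA] at h2
    rcases h2 with ⟨h, _⟩ | ⟨_, _, h⟩ | ⟨i, _, _, h, rfl⟩ | ⟨j', _, _, hjj, h⟩
    · omega
    · exact Or.inl h
    · have := blk_lb h; omega
    · have : j' = j := by omega
      subst this; exact Or.inr h
  · rintro (rfl | h)
    · exact ⟨by omega, mem_DA.2 (Or.inr (Or.inl ⟨by omega, by omega, rfl⟩))⟩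
    · refine ⟨by have := blk_ub (s := s) (by omega) h; omega,
        mem_DA.2 (Or.inr (Or.inr (Or.inr ⟨j, hj1, hj2, rfl, h⟩)))⟩

lemma inN_mid {m : ℕ} (hm1 : r+1 ≤ m) (hm2 : m ≤ 2*r) : (DD r s).inN m = ∅ := by
  obtain ⟨hp2, hpr, hq1, hqr, hpq, hps⟩ := pq_facts hr hs1 hs2
  ext u
  simp only [FinDigraph.inN, Finset.mem_filter]
  simp only [FinDigraph.inN, DD, Finset.mem_filter, Finset.notMem_empty, iff_false, not_and]
  intro _ h2
  rw [mem_DA] at h2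
  rcases h2 with ⟨_, _, h⟩ | ⟨_, _, h⟩ | ⟨i, _, hi, _, rfl⟩ | ⟨j, _, _, _, h⟩
  · omega
  · omega
  · omega
  · have := blk_lb h; omega

lemma outN_pad {m : ℕ} (hm1 : r + qq r s + 1 ≤ m) (hm2 : m ≤ 2*r) :
    (DD r s).outN m = {0} := by
  have hN := NN_ge hr hs1 hs2
  ext u
  simp only [FinDigraph.outN, Finset.mem_filter]
  simp only [FinDigraph.outN, DD, Finset.mem_filter, Finset.mem_singleton, HV, Finset.mem_range]
  constructor
  · rintro ⟨h1, h2⟩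
    rw [mem_DA] at h2
    rcases h2 with ⟨h, _⟩ | ⟨_, _, h⟩ | ⟨i, _, _, h, _⟩ | ⟨j, _, hj, h, _⟩
    · omega
    · exact h
    · have := blk_lb h; omega
    · omega
  · rintro rfl
    exact ⟨by omega, mem_DA.2 (Or.inr (Or.inl ⟨by omega, hm2, rfl⟩))⟩

lemma outN_blkin {u i : ℕ} (hi1 : 1 ≤ i) (hi2 : i ≤ pp r s) (hu : u ∈ blk r i) :
    (DD r s).outN u = {i} := by
  obtain ⟨hp2, hpr, hq1, hqr, hpq, hps⟩ := pq_facts hr hs1 hs2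
  have hN := NN_ge hr hs1 hs2
  have hub := blk_lb hu
  ext b
  simp only [FinDigraph.outN, Finset.mem_filter]
  simp only [FinDigraph.outN, DD, Finset.mem_filter, Finset.mem_singleton, HV, Finset.mem_range]
  constructor
  · rintro ⟨h1, h2⟩
    rw [mem_DA] at h2
    rcases h2 with ⟨h, _⟩ | ⟨_, h, _⟩ | ⟨i', hi1', _, h, rfl⟩ | ⟨j, hj1, _, h, _⟩
    · omega
    · omega
    · exact blk_eq_of_mem hi1' hi1 (by omega) h hu
    · omega
  · rintro rfl
    exact ⟨by omega, mem_DA.2 (Or.inr (Or.inr (Or.inl ⟨_, hi1, hi2, hu, rfl⟩)))⟩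

lemma inN_blkin {u i : ℕ} (hi1 : 1 ≤ i) (hi2 : i ≤ pp r s) (hu : u ∈ blk r i) :
    (DD r s).inN u = ∅ := by
  obtain ⟨hp2, hpr, hq1, hqr, hpq, hps⟩ := pq_facts hr hs1 hs2
  have hub := blk_lb hu
  ext a
  simp only [FinDigraph.inN, Finset.mem_filter]
  simp only [FinDigraph.inN, DD, Finset.mem_filter, Finset.notMem_empty, iff_false, not_and]
  intro _ h2
  rw [mem_DA] at h2
  rcases h2 with ⟨_, _, h⟩ | ⟨_, _, h⟩ | ⟨i', _, hi', _, rfl⟩ | ⟨j, hj1, _, _, h⟩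
  · omega
  · omega
  · omega
  · have : i = pp r s + j := blk_eq_of_mem hi1 (by omega) (by omega) hu h
    omega

lemma inN_blkout {u j : ℕ} (hj1 : 1 ≤ j) (hj2 : j ≤ qq r s) (hu : u ∈ blk r (pp r s + j)) :
    (DD r s).inN u = {r + j} := by
  obtain ⟨hp2, hpr, hq1, hqr, hpq, hps⟩ := pq_facts hr hs1 hs2
  have hN := NN_ge hr hs1 hs2
  have hub := blk_lb hu
  ext a
  simp only [FinDigraph.inN, Finset.mem_filter]
  simp only [FinDigraph.inN, DD, Finset.mem_filter, Finset.mem_singleton, HV, Finset.mem_range]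
  constructor
  · rintro ⟨h1, h2⟩
    rw [mem_DA] at h2
    rcases h2 with ⟨_, _, h⟩ | ⟨_, _, h⟩ | ⟨i', _, hi', _, rfl⟩ | ⟨j', hj1', _, rfl, h⟩
    · omega
    · omega
    · omega
    · have : pp r s + j = pp r s + j' :=
        blk_eq_of_mem (by omega) (by omega) (by omega) hu h
      omega
  · rintro rfl
    exact ⟨by omega, mem_DA.2 (Or.inr (Or.inr (Or.inr ⟨j, hj1, hj2, rfl, hu⟩)))⟩

lemma outN_blkout {u j : ℕ} (hj1 : 1 ≤ j) (hj2 : j ≤ qq r s) (hu : u ∈ blk r (pp r s + j)) :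
    (DD r s).outN u = ∅ := by
  obtain ⟨hp2, hpr, hq1, hqr, hpq, hps⟩ := pq_facts hr hs1 hs2
  have hub := blk_lb hu
  ext b
  simp only [FinDigraph.outN, Finset.mem_filter]
  simp only [FinDigraph.outN, DD, Finset.mem_filter, Finset.notMem_empty, iff_false, not_and]
  intro _ h2
  rw [mem_DA] at h2
  rcases h2 with ⟨h, _⟩ | ⟨_, h, _⟩ | ⟨i', hi1', hi2', h, rfl⟩ | ⟨j', _, _, h, _⟩
  · omega
  · omega
  · have := blk_eq_of_mem hi1' (show 1 ≤ pp r s + j by omega) (show 2 ≤ r by omega) h hu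
    omega
  · omega

end Nbhd
end NicheNum

namespace NicheNum
section NH
variable {r s : ℕ} (hr : 3 ≤ r) (hs1 : 3 ≤ s) (hs2 : s ≤ 2*r)

lemma mem_HE {e : Finset ℕ} : e ∈ HE r s ↔
    e = Finset.Icc 1 r ∨ e = Finset.Icc (r+1) (2*r) ∨
    ∃ i, 1 ≤ i ∧ i ≤ s ∧ e = insert 0 (blk r i) := by
  simp only [HE, Finset.mem_insert, Finset.mem_image, Finset.mem_Icc]
  constructor
  · rintro (h | h | ⟨i, ⟨h1, h2⟩, h3⟩)
    · exact Or.inl h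
    · exact Or.inr (Or.inl h)
    · exact Or.inr (Or.inr ⟨i, h1, h2, h3.symm⟩)
  · rintro (h | h | ⟨i, h1, h2, h3⟩)
    · exact Or.inl h
    · exact Or.inr (Or.inl h)
    · exact Or.inr (Or.inr ⟨i, ⟨h1, h2⟩, h3.symm⟩)

include hr in
lemma card_g {i : ℕ} (hi : 1 ≤ i) : (insert 0 (blk r i)).card = r := by
  rw [Finset.card_insert_of_notMem (zero_not_mem_blk (by omega)), blk_card (by omega) hi]
  omega

include hr in
lemma HE_card : ∀ e ∈ HE r s, e.card = r := by
  intro e he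
  rcases mem_HE.1 he with rfl | rfl | ⟨i, h1, h2, rfl⟩
  · rw [Nat.card_Icc]; omega
  · rw [Nat.card_Icc]; omega
  · exact card_g hr h1

include hr hs1 hs2 in
lemma HE_sub : ∀ e ∈ HE r s, e ⊆ HV r s := by
  have hN := NN_ge hr hs1 hs2
  intro e he u hu
  rw [mem_HV hr hs1 hs2]
  rcases mem_HE.1 he with rfl | rfl | ⟨i, h1, h2, rfl⟩
  · rw [Finset.mem_Icc] at hu; omega
  · rw [Finset.mem_Icc] at hu; omega
  · rcases Finset.mem_insert.1 hu with rfl | hu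
    · omega
    · exact blk_ub h2 hu

include hr hs1 hs2 in
lemma NH_eq : (DD r s).NH = HE r s := by
  obtain ⟨hp2, hpr, hq1, hqr, hpq, hps⟩ := pq_facts hr hs1 hs2
  have hN := NN_ge hr hs1 hs2
  ext e
  simp only [FinDigraph.NH, Finset.mem_filter, Finset.mem_union, Finset.mem_image]
  constructor
  · rintro ⟨(⟨v, hv, rfl⟩ | ⟨v, hv, rfl⟩), hcard⟩
    · -- e = inN v
      rw [show (DD r s).verts = HV r s from rfl, mem_HV hr hs1 hs2] at hv
      rcases Nat.eq_zero_or_pos v with rfl | hv0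
      · rw [inN_zero hr hs1 hs2]; exact mem_HE.2 (Or.inr (Or.inl rfl))
      rcases le_or_gt v r with hvr | hvr
      · rcases le_or_gt v (pp r s) with hvp | hvp
        · rw [inN_apex hr hs1 hs2 hv0 hvp]
          exact mem_HE.2 (Or.inr (Or.inr ⟨v, hv0, by omega, rfl⟩))
        · rw [inN_pad hr hs1 hs2 (by omega) hvr] at hcard ⊢
          simp at hcard
      rcases le_or_gt v (2*r) with hv2r | hv2r
      · rw [inN_mid hr hs1 hs2 (by omega) hv2r] at hcard
        simp at hcard
      · obtain ⟨i, hi1, hi2, hib⟩ := blk_cover (r := r) (by omega) s v (by omega) (by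
          have : v ≤ NN r s := hv
          unfold NN at this; omega)
        rcases le_or_gt i (pp r s) with hip | hip
        · rw [inN_blkin hr hs1 hs2 hi1 hip hib] at hcard
          simp at hcard
        · have hib' : v ∈ blk r (pp r s + (i - pp r s)) := by
            rwa [show pp r s + (i - pp r s) = i by omega]
          rw [inN_blkout hr hs1 hs2 (by omega) (by omega) hib'] at hcard
          simp at hcard
    · -- e = outN v
      rw [show (DD r s).verts = HV r s from rfl, mem_HV hr hs1 hs2] at hv
      rcases Nat.eq_zero_or_pos v with rfl | hv0
      · rw [outN_zero hr hs1 hs2]; exact mem_HE.2 (Or.inl rfl)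
      rcases le_or_gt v r with hvr | hvr
      · rw [outN_low hr hs1 hs2 hv0 hvr] at hcard
        simp at hcard
      rcases le_or_gt v (2*r) with hv2r | hv2r
      · rcases le_or_gt v (r + qq r s) with hvq | hvq
        · have hj : v = r + (v - r) := by omega
          rw [hj, outN_apex hr hs1 hs2 (by omega) (by omega)]
          exact mem_HE.2 (Or.inr (Or.inr ⟨pp r s + (v - r), by omega, by omega, rfl⟩))
        · rw [outN_pad hr hs1 hs2 (by omega) hv2r] at hcard
          simp at hcard
      · obtain ⟨i, hi1, hi2, hib⟩ := blk_cover (r := r) (by omega) s v (by omega) (by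
          have : v ≤ NN r s := hv
          unfold NN at this; omega)
        rcases le_or_gt i (pp r s) with hip | hip
        · rw [outN_blkin hr hs1 hs2 hi1 hip hib] at hcard
          simp at hcard
        · have hib' : v ∈ blk r (pp r s + (i - pp r s)) := by
            rwa [show pp r s + (i - pp r s) = i by omega]
          rw [outN_blkout hr hs1 hs2 (by omega) (by omega) hib'] at hcard
          simp at hcard
  · intro he
    have hcard : 2 ≤ e.card := by rw [HE_card hr e he]; omega
    refine ⟨?_, hcard⟩
    have h0 : (0 : ℕ) ∈ (DD r s).verts := by
      rw [show (DD r s).verts = HV r s from rfl, mem_HV hr hs1 hs2]; omega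
    rcases mem_HE.1 he with rfl | rfl | ⟨i, h1, h2, rfl⟩
    · exact Or.inr ⟨0, h0, outN_zero hr hs1 hs2⟩
    · exact Or.inl ⟨0, h0, inN_zero hr hs1 hs2⟩
    · rcases le_or_gt i (pp r s) with hip | hip
      · refine Or.inl ⟨i, ?_, inN_apex hr hs1 hs2 h1 hip⟩
        rw [show (DD r s).verts = HV r s from rfl, mem_HV hr hs1 hs2]; omega
      · refine Or.inr ⟨r + (i - pp r s), ?_, ?_⟩
        · rw [show (DD r s).verts = HV r s from rfl, mem_HV hr hs1 hs2]; omega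
        · rw [outN_apex hr hs1 hs2 (by omega) (by omega),
            show pp r s + (i - pp r s) = i by omega]

end NH
end NicheNum

namespace NicheNum
section Props
variable {r s : ℕ} (hr : 3 ≤ r) (hs1 : 3 ≤ s) (hs2 : s ≤ 2*r)

include hr in
lemma blk_nonempty {i : ℕ} (hi : 1 ≤ i) : (blk r i).Nonempty := by
  rw [blk, Finset.nonempty_Icc]
  obtain ⟨k, rfl⟩ : ∃ k, i = k + 1 := ⟨i - 1, by omega⟩
  simp only [Nat.add_sub_cancel, add_one_mul]
  omega

include hr in
lemma HE_linear : ∀ e ∈ HE r s, ∀ f ∈ HE r s, e ≠ f → (e ∩ f).card ≤ 1 := by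
  intro e he f hf hef
  rw [Finset.card_le_one]
  intro a ha b hb
  rw [Finset.mem_inter] at ha hb
  obtain ⟨ha1, ha2⟩ := ha
  obtain ⟨hb1, hb2⟩ := hb
  rcases mem_HE.1 he with rfl | rfl | ⟨i, hi1, hi2, rfl⟩ <;>
    rcases mem_HE.1 hf with rfl | rfl | ⟨j, hj1, hj2, rfl⟩
  · exact absurd rfl hef
  · rw [Finset.mem_Icc] at ha1 ha2; omega
  · rw [Finset.mem_Icc] at ha1
    rcases Finset.mem_insert.1 ha2 with rfl | h
    · omega
    · have := blk_lb h; omega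
  · rw [Finset.mem_Icc] at ha1 ha2; omega
  · exact absurd rfl hef
  · rw [Finset.mem_Icc] at ha1
    rcases Finset.mem_insert.1 ha2 with rfl | h
    · omega
    · have := blk_lb h; omega
  · rw [Finset.mem_Icc] at ha2
    rcases Finset.mem_insert.1 ha1 with rfl | h
    · omega
    · have := blk_lb h; omega
  · rw [Finset.mem_Icc] at ha2
    rcases Finset.mem_insert.1 ha1 with rfl | h
    · omega
    · have := blk_lb h; omega
  · -- two block edges
    have hij : i ≠ j := fun h => hef (by rw [h])
    have ha0 : a = 0 := by
      rcases Finset.mem_insert.1 ha1 with rfl | h1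
      · rfl
      · rcases Finset.mem_insert.1 ha2 with rfl | h2
        · rfl
        · exact absurd (blk_eq_of_mem hi1 hj1 (by omega) h1 h2) hij
    have hb0 : b = 0 := by
      rcases Finset.mem_insert.1 hb1 with rfl | h1
      · rfl
      · rcases Finset.mem_insert.1 hb2 with rfl | h2
        · rfl
        · exact absurd (blk_eq_of_mem hi1 hj1 (by omega) h1 h2) hij
    rw [ha0, hb0]

include hr hs1 hs2 in
lemma degree_zero : ((HE r s).filter fun e => 0 ∈ e).card = s := by
  have h1 : (HE r s).filter (fun e => 0 ∈ e) =
      (Finset.Icc 1 s).image fun i => insert 0 (blk r i) := by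
    ext e
    simp only [Finset.mem_filter, Finset.mem_image, Finset.mem_Icc]
    constructor
    · rintro ⟨he, h0⟩
      rcases mem_HE.1 he with rfl | rfl | ⟨i, hi1, hi2, rfl⟩
      · rw [Finset.mem_Icc] at h0; omega
      · rw [Finset.mem_Icc] at h0; omega
      · exact ⟨i, ⟨hi1, hi2⟩, rfl⟩
    · rintro ⟨i, ⟨hi1, hi2⟩, rfl⟩
      exact ⟨mem_HE.2 (Or.inr (Or.inr ⟨i, hi1, hi2, rfl⟩)), Finset.mem_insert_self _ _⟩
  rw [h1, Finset.card_image_of_injOn, Nat.card_Icc]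
  · omega
  · intro i hi j hj hij
    rw [Finset.mem_coe, Finset.mem_Icc] at hi hj
    obtain ⟨x, hx⟩ := blk_nonempty hr hi.1
    have hx0 : x ≠ 0 := by have := blk_lb hx; omega
    have hxj : x ∈ insert 0 (blk r j) := by
      have hij' : insert 0 (blk r i) = insert 0 (blk r j) := hij
      rw [← hij']; exact Finset.mem_insert_of_mem hx
    rcases Finset.mem_insert.1 hxj with rfl | hxj'
    · exact absurd rfl hx0
    · exact blk_eq_of_mem hi.1 hj.1 (by omega) hx hxj'

include hr in
lemma degree_le_one {v : ℕ} (hv : v ≠ 0) : ((HE r s).filter fun e => v ∈ e).card ≤ 1 := by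
  rw [Finset.card_le_one]
  intro e he f hf
  rw [Finset.mem_filter] at he hf
  obtain ⟨he1, he2⟩ := he
  obtain ⟨hf1, hf2⟩ := hf
  have key : ∀ g ∈ HE r s, v ∈ g →
      (v ∈ Finset.Icc 1 r ∧ g = Finset.Icc 1 r) ∨
      (v ∈ Finset.Icc (r+1) (2*r) ∧ g = Finset.Icc (r+1) (2*r)) ∨
      (∃ i, 1 ≤ i ∧ v ∈ blk r i ∧ g = insert 0 (blk r i)) := by
    intro g hg hvg
    rcases mem_HE.1 hg with rfl | rfl | ⟨i, hi1, hi2, rfl⟩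
    · exact Or.inl ⟨hvg, rfl⟩
    · exact Or.inr (Or.inl ⟨hvg, rfl⟩)
    · rcases Finset.mem_insert.1 hvg with rfl | h
      · exact absurd rfl hv
      · exact Or.inr (Or.inr ⟨i, hi1, h, rfl⟩)
  rcases key e he1 he2 with ⟨hv1, rfl⟩ | ⟨hv1, rfl⟩ | ⟨i, hi1, hv1, rfl⟩ <;>
    rcases key f hf1 hf2 with ⟨hv2, rfl⟩ | ⟨hv2, rfl⟩ | ⟨j, hj1, hv2, rfl⟩
  · rfl
  · rw [Finset.mem_Icc] at hv1 hv2; omega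
  · have := blk_lb hv2; rw [Finset.mem_Icc] at hv1; omega
  · rw [Finset.mem_Icc] at hv1 hv2; omega
  · rfl
  · have := blk_lb hv2; rw [Finset.mem_Icc] at hv1; omega
  · have := blk_lb hv1; rw [Finset.mem_Icc] at hv2; omega
  · have := blk_lb hv1; rw [Finset.mem_Icc] at hv2; omega
  · rw [blk_eq_of_mem hi1 hj1 (by omega) hv1 hv2]

include hr hs1 hs2 in
lemma DD_legal : (DD r s).IsLegal := by
  constructor
  · rintro ⟨a, b⟩ hab
    obtain ⟨h1, h2⟩ := DA_sub_verts hr hs1 hs2 hab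
    have h3 := DA_bounds hr hs1 hs2 hab
    exact ⟨h1, h2, by omega⟩
  · intro u v huv hvu
    have h1 := DA_bounds hr hs1 hs2 huv
    have h2 := DA_bounds hr hs1 hs2 hvu
    omega

def lvl (r m : ℕ) : ℕ := if m = 0 then 1 else if m ≤ r then 2 else if m ≤ 2*r then 0 else 1

include hr hs1 hs2 in
lemma lvl_mono {a b : ℕ} (h : (a, b) ∈ DA r s) : lvl r a < lvl r b := by
  have h3 := DA_bounds hr hs1 hs2 h
  unfold lvl
  split_ifs <;> omega

include hr hs1 hs2 in
lemma DD_acyclic : (DD r s).IsAcyclic := by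
  rw [FinDigraph.IsAcyclic]
  rintro ⟨n, x, hn, hinj, hstep, hclose⟩
  have mono : ∀ i, i < n → lvl r (x 0) ≤ lvl r (x i) := by
    intro i
    induction i with
    | zero => intro _; exact le_refl _
    | succ i ih =>
      intro h
      exact (ih (by omega)).trans (lvl_mono hr hs1 hs2 (hstep i (by omega))).le
  have h1 := mono (n-1) (by omega)
  have h2 := lvl_mono hr hs1 hs2 hclose
  omega

end Props
end NicheNum

namespace NicheNum

def par (r m : ℕ) : ℕ := if m = 0 then 0 else if m = r+1 then 0 else if m ≤ 2*r then m - 1 else 0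

lemma par_lt {r m : ℕ} (hm : m ≠ 0) : par r m < m := by unfold par; split_ifs <;> omega

lemma par_le {r m : ℕ} : par r m ≤ m := by
  rcases Nat.eq_zero_or_pos m with rfl | h
  · simp [par]
  · exact (par_lt (by omega)).le

def fpar (r s : ℕ) : {x // x ∈ HV r s} → {x // x ∈ HV r s} := fun x => ⟨par r x.1, by
  have h1 : par r x.1 ≤ x.1 := par_le
  have h2 := x.2
  simp only [HV, Finset.mem_range] at h2 ⊢
  omega⟩

def TT (r s : ℕ) : SimpleGraph {x // x ∈ HV r s} :=
  SimpleGraph.fromRel fun a b => fpar r s a = b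

lemma TT_isTree (r s : ℕ) : (TT r s).IsTree := by
  apply parentTree_isTree (fpar r s) (fun x => x.1) ⟨0, by simp [HV]⟩
  · apply Subtype.ext; simp [fpar, par]
  · intro v hv
    apply par_lt
    intro h0
    exact hv (Subtype.ext h0)

lemma TT_adj {r s : ℕ} {a b : {x // x ∈ HV r s}} (hne : a.1 ≠ b.1) (h : par r a.1 = b.1) :
    (TT r s).Adj a b := by
  rw [TT, SimpleGraph.fromRel_adj]
  exact ⟨fun hab => hne (by rw [hab]), Or.inl (Subtype.ext h)⟩

lemma conn_of_all_reach {V : Type*} (G : SimpleGraph V) (A : Set V) (b : ↥A)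
    (h : ∀ a : ↥A, (G.induce A).Reachable a b) : (G.induce A).Connected := by
  rw [SimpleGraph.connected_iff]
  exact ⟨fun u v => (h u).trans (h v).symm, ⟨b⟩⟩

section Tree
variable {r s : ℕ}

lemma induced_Icc_connected {lo hi : ℕ} (hlohi : lo ≤ hi) (hhi : hi ≤ NN r s)
    (hcond : ∀ m, lo < m → m ≤ hi → (m ≠ 0 ∧ m ≠ r + 1 ∧ m ≤ 2*r)) :
    ((TT r s).induce {x : {x // x ∈ HV r s} | x.1 ∈ Finset.Icc lo hi}).Connected := by
  have hloHV : lo ∈ HV r s := by simp only [HV, Finset.mem_range]; omega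
  set A : Set {x // x ∈ HV r s} := {x | x.1 ∈ Finset.Icc lo hi} with hA
  have hbmem : (⟨lo, hloHV⟩ : {x // x ∈ HV r s}) ∈ A := by
    simp only [hA, Set.mem_setOf_eq, Finset.mem_Icc]; omega
  refine conn_of_all_reach _ _ ⟨⟨lo, hloHV⟩, hbmem⟩ ?_
  have main : ∀ n (a : ↥A), a.1.1 = n →
      ((TT r s).induce A).Reachable a ⟨⟨lo, hloHV⟩, hbmem⟩ := by
    intro n
    induction n using Nat.strong_induction_on with
    | _ n ih =>
      intro a han
      have haIcc : a.1.1 ∈ Finset.Icc lo hi := a.2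
      rw [Finset.mem_Icc] at haIcc
      by_cases hl : a.1.1 = lo
      · have : a = ⟨⟨lo, hloHV⟩, hbmem⟩ := Subtype.ext (Subtype.ext hl)
        rw [this]
      · have hgt : lo < a.1.1 := by omega
        obtain ⟨h0, h1, h2⟩ := hcond a.1.1 hgt haIcc.2
        have hpar : par r a.1.1 = a.1.1 - 1 := by unfold par; split_ifs <;> omega
        have hmem : a.1.1 - 1 ∈ HV r s := by
          have := a.1.2
          simp only [HV, Finset.mem_range] at this ⊢
          omega
        have hmemA : (⟨a.1.1 - 1, hmem⟩ : {x // x ∈ HV r s}) ∈ A := by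
          simp only [hA, Set.mem_setOf_eq, Finset.mem_Icc]; omega
        have hadj : ((TT r s).induce A).Adj a ⟨⟨a.1.1 - 1, hmem⟩, hmemA⟩ := by
          simp only [SimpleGraph.comap_adj, Function.Embedding.coe_subtype]
          exact TT_adj (by simp only []; omega) (by simp only []; omega)
        exact hadj.reachable.trans (ih (a.1.1 - 1) (by omega) _ rfl)
  intro a
  exact main a.1.1 a rfl

lemma induced_blk_connected (hr : 3 ≤ r) {i : ℕ} (hi1 : 1 ≤ i) (hi2 : i ≤ s) :
    ((TT r s).induce {x : {x // x ∈ HV r s} | x.1 ∈ insert 0 (blk r i)}).Connected := by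
  have h0HV : (0:ℕ) ∈ HV r s := by simp [HV]
  set A : Set {x // x ∈ HV r s} := {x | x.1 ∈ insert 0 (blk r i)} with hA
  have hbmem : (⟨0, h0HV⟩ : {x // x ∈ HV r s}) ∈ A := by
    simp [hA]
  refine conn_of_all_reach _ _ ⟨⟨0, h0HV⟩, hbmem⟩ ?_
  intro a
  by_cases h0 : a.1.1 = 0
  · have : a = ⟨⟨0, h0HV⟩, hbmem⟩ := Subtype.ext (Subtype.ext h0)
    rw [this]
  · have hab : a.1.1 ∈ blk r i := by
      have := a.2
      simp only [hA, Set.mem_setOf_eq, Finset.mem_insert] at this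
      rcases this with h | h
      · exact absurd h h0
      · exact h
    have hlb := blk_lb hab
    have hpar : par r a.1.1 = 0 := by unfold par; split_ifs <;> omega
    have hadj : ((TT r s).induce A).Adj a ⟨⟨0, h0HV⟩, hbmem⟩ := by
      simp only [SimpleGraph.comap_adj, Function.Embedding.coe_subtype]
      exact TT_adj (by simp only []; omega) (by simp only []; omega)
    exact hadj.reachable

lemma hypertree_part (hr : 3 ≤ r) (hs1 : 3 ≤ s) (hs2 : s ≤ 2*r) :
    ∃ T : SimpleGraph {x // x ∈ HV r s}, T.IsTree ∧
      ∀ e ∈ HE r s, (T.induce {x : {x // x ∈ HV r s} | x.1 ∈ e}).Connected := by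
  have hN := NN_ge hr hs1 hs2
  refine ⟨TT r s, TT_isTree r s, ?_⟩
  intro e he
  rcases mem_HE.1 he with rfl | rfl | ⟨i, hi1, hi2, rfl⟩
  · exact induced_Icc_connected (by omega) (by omega) (by intro m h1 h2; omega)
  · exact induced_Icc_connected (by omega) (by omega) (by intro m h1 h2; omega)
  · exact induced_blk_connected hr hi1 hi2

end Tree
end NicheNum

end NicheAux

/-- For every `r ≥ 3` and every `3 ≤ s ≤ 2r` there is an `r`-uniform linear hypertree
with maximum degree exactly `s` and niche number zero. -/
theorem exists_uniform_hypertree_niche_zero (r s : ℕ) (hr : 3 ≤ r)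
    (hs1 : 3 ≤ s) (hs2 : s ≤ 2 * r) :
    ∃ H : FinHypergraph ℕ, (∀ e ∈ H.edges, e.card = r) ∧ H.IsLinear ∧ H.IsHypertree ∧
      (∃ v : ℕ, H.degree v = s) ∧ (∀ v : ℕ, H.degree v ≤ s) ∧
      ∃ D : FinDigraph ℕ, D.IsLegal ∧ D.IsAcyclic ∧ D.verts = H.verts ∧
        D.NH = H.edges := by
  obtain ⟨hp2, hpr, hq1, hqr, hpq, hps⟩ := NicheNum.pq_facts hr hs1 hs2
  refine ⟨⟨NicheNum.HV r s, NicheNum.HE r s, NicheNum.HE_sub hr hs1 hs2,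
    fun e he => by rw [NicheNum.HE_card hr e he]; omega⟩, ?_, ?_, ?_, ?_, ?_, ?_⟩
  · exact NicheNum.HE_card hr
  · exact NicheNum.HE_linear hr
  · exact NicheNum.hypertree_part hr hs1 hs2
  · exact ⟨0, NicheNum.degree_zero hr hs1 hs2⟩
  · intro v
    by_cases hv : v = 0
    · subst hv
      have h := NicheNum.degree_zero hr hs1 hs2
      exact le_of_eq h
    · have h := NicheNum.degree_le_one hr (s := s) hv
      show (Finset.filter (fun e => v ∈ e) (NicheNum.HE r s)).card ≤ s
      omega
  · exact ⟨NicheNum.DD r s, NicheNum.DD_legal hr hs1 hs2, NicheNum.DD_acyclic hr hs1 hs2,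
      rfl, NicheNum.NH_eq hr hs1 hs2⟩
end

section
/- Let D1 and D2 be acyclic digraphs sharing exactly one vertex u with N⁻_{D1}(u) = ∅ and N⁺_{D2}(u) = ∅, let D = D1 ∪ D2, and suppose each D_i is a good digraph of a hypergraph H_i (i.e., NH(D_i) = H_i and each hyperedge of H_i contains at most one degree-one vertex with both in- and out-neighbour sets nonempty in D_i). Then D is a good digraph of the hypergraph H with V(H) = V(H1) ∪ V(H2) and E(H) = E(H1) ∪ E(H2), provided u is a degree-one vertex in both H1 and H2. -/
section Aux

variable {α : Type*} [DecidableEq α]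

lemma FinDigraph.mem_inN' {D : FinDigraph α} {v w : α} :
    w ∈ D.inN v ↔ w ∈ D.verts ∧ (w, v) ∈ D.arcs := by
  simp [FinDigraph.inN]

lemma FinDigraph.mem_outN' {D : FinDigraph α} {v w : α} :
    w ∈ D.outN v ↔ w ∈ D.verts ∧ (v, w) ∈ D.arcs := by
  simp [FinDigraph.outN]

lemma FinDigraph.mem_NH' {D : FinDigraph α} {e : Finset α} :
    e ∈ D.NH ↔ ((∃ v ∈ D.verts, D.inN v = e) ∨ ∃ v ∈ D.verts, D.outN v = e) ∧ 2 ≤ e.card := by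
  unfold FinDigraph.NH
  simp only [Finset.mem_filter, Finset.mem_union, Finset.mem_image]

/-- On a cycle of length `n`, if a boolean function takes value `true` somewhere and
`false` somewhere, then it changes from `true` to `false` at some point. -/
lemma cyc_change {n : ℕ} (hn : 0 < n) (f : ℕ → Bool) {i j : ℕ} (hi : i < n) (hj : j < n)
    (hfi : f i = true) (hfj : f j = false) :
    ∃ k < n, f k = true ∧ f ((k + 1) % n) = false := by
  by_contra h
  push_neg at h
  have key : ∀ t, f ((i + t) % n) = true := by
    intro t
    induction t with
    | zero => simpa [Nat.mod_eq_of_lt hi] using hfi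
    | succ t ih =>
      have hk : (i + t) % n < n := Nat.mod_lt _ hn
      have h2 := h _ hk ih
      have h3 : f (((i + t) % n + 1) % n) = true := by
        cases hb : f (((i + t) % n + 1) % n) with
        | false => exact absurd hb h2
        | true => rfl
      rw [Nat.mod_add_mod] at h3
      simpa [Nat.add_assoc] using h3
  have := key (n + j - i)
  have heq : (i + (n + j - i)) % n = j := by
    have : i + (n + j - i) = n + j := by omega
    rw [this, Nat.add_mod_left, Nat.mod_eq_of_lt hj]
  rw [heq, hfj] at this
  exact Bool.false_ne_true this

end Aux

/-- Gluing two good digraphs at a common bud `u`, which is a source in one and a sink in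
the other, yields a good digraph of the union hypergraph. -/
theorem glue_good_digraphs {α : Type*} [DecidableEq α]
    (D1 D2 : FinDigraph α) (h1 : D1.IsLegal) (h2 : D2.IsLegal)
    (H1 H2 : FinHypergraph α) (u : α)
    (hint : D1.verts ∩ D2.verts = {u})
    (hin : D1.inN u = ∅) (hout : D2.outN u = ∅)
    (hg1 : GoodDigraph D1 H1) (hg2 : GoodDigraph D2 H2)
    (hb1 : H1.degree u = 1) (hb2 : H2.degree u = 1) :
    ∃ H : FinHypergraph α, H.verts = H1.verts ∪ H2.verts ∧
      H.edges = H1.edges ∪ H2.edges ∧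
      GoodDigraph ⟨D1.verts ∪ D2.verts, D1.arcs ∪ D2.arcs⟩ H := by

  obtain ⟨hac1, hv1, hnh1, hbud1⟩ := hg1
  obtain ⟨hac2, hv2, hnh2, hbud2⟩ := hg2
  have harc1 := h1.1
  have harc2 := h2.1
  have honly : ∀ v, v ∈ D1.verts → v ∈ D2.verts → v = u := by
    intro v hv1' hv2'
    have : v ∈ D1.verts ∩ D2.verts := Finset.mem_inter.mpr ⟨hv1', hv2'⟩
    rw [hint] at this
    exact Finset.mem_singleton.mp this
  have humem : u ∈ D1.verts ∩ D2.verts := by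
    rw [hint]; exact Finset.mem_singleton_self u
  have hu1 : u ∈ D1.verts := (Finset.mem_inter.mp humem).1
  have hu2 : u ∈ D2.verts := (Finset.mem_inter.mp humem).2
  have hinU : ∀ v, (FinDigraph.mk (D1.verts ∪ D2.verts) (D1.arcs ∪ D2.arcs)).inN v
      = D1.inN v ∪ D2.inN v := by
    intro v
    ext w
    simp only [FinDigraph.mem_inN', Finset.mem_union]
    constructor
    · rintro ⟨hw, ha | ha⟩
      · exact Or.inl ⟨(harc1 _ ha).1, ha⟩
      · exact Or.inr ⟨(harc2 _ ha).1, ha⟩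
    · rintro (⟨hw, ha⟩ | ⟨hw, ha⟩)
      · exact ⟨Or.inl hw, Or.inl ha⟩
      · exact ⟨Or.inr hw, Or.inr ha⟩
  have houtU : ∀ v, (FinDigraph.mk (D1.verts ∪ D2.verts) (D1.arcs ∪ D2.arcs)).outN v
      = D1.outN v ∪ D2.outN v := by
    intro v
    ext w
    simp only [FinDigraph.mem_outN', Finset.mem_union]
    constructor
    · rintro ⟨hw, ha | ha⟩
      · exact Or.inl ⟨(harc1 _ ha).2.1, ha⟩
      · exact Or.inr ⟨(harc2 _ ha).2.1, ha⟩
    · rintro (⟨hw, ha⟩ | ⟨hw, ha⟩)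
      · exact ⟨Or.inl hw, Or.inl ha⟩
      · exact ⟨Or.inr hw, Or.inr ha⟩
  have hin1e : ∀ v, v ∉ D1.verts → D1.inN v = ∅ := by
    intro v hv
    rw [Finset.eq_empty_iff_forall_notMem]
    intro w hw
    rw [FinDigraph.mem_inN'] at hw
    exact hv (harc1 _ hw.2).2.1
  have hin2e : ∀ v, v ∉ D2.verts → D2.inN v = ∅ := by
    intro v hv
    rw [Finset.eq_empty_iff_forall_notMem]
    intro w hw
    rw [FinDigraph.mem_inN'] at hw
    exact hv (harc2 _ hw.2).2.1
  have hout1e : ∀ v, v ∉ D1.verts → D1.outN v = ∅ := by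
    intro v hv
    rw [Finset.eq_empty_iff_forall_notMem]
    intro w hw
    rw [FinDigraph.mem_outN'] at hw
    exact hv (harc1 _ hw.2).1
  have hout2e : ∀ v, v ∉ D2.verts → D2.outN v = ∅ := by
    intro v hv
    rw [Finset.eq_empty_iff_forall_notMem]
    intro w hw
    rw [FinDigraph.mem_outN'] at hw
    exact hv (harc2 _ hw.2).1
  have hnot2 : ∀ v, v ∈ D1.verts → v ≠ u → v ∉ D2.verts :=
    fun v hv hne h2v => hne (honly v hv h2v)
  have hnot1 : ∀ v, v ∈ D2.verts → v ≠ u → v ∉ D1.verts :=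
    fun v hv hne h1v => hne (honly v h1v hv)
  have hDin1 : ∀ v, v ∈ D1.verts → v ≠ u →
      (FinDigraph.mk (D1.verts ∪ D2.verts) (D1.arcs ∪ D2.arcs)).inN v = D1.inN v := by
    intro v hv hne
    rw [hinU, hin2e v (hnot2 v hv hne), Finset.union_empty]
  have hDout1 : ∀ v, v ∈ D1.verts → v ≠ u →
      (FinDigraph.mk (D1.verts ∪ D2.verts) (D1.arcs ∪ D2.arcs)).outN v = D1.outN v := by
    intro v hv hne
    rw [houtU, hout2e v (hnot2 v hv hne), Finset.union_empty]
  have hDin2 : ∀ v, v ∈ D2.verts → v ≠ u →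
      (FinDigraph.mk (D1.verts ∪ D2.verts) (D1.arcs ∪ D2.arcs)).inN v = D2.inN v := by
    intro v hv hne
    rw [hinU, hin1e v (hnot1 v hv hne), Finset.empty_union]
  have hDout2 : ∀ v, v ∈ D2.verts → v ≠ u →
      (FinDigraph.mk (D1.verts ∪ D2.verts) (D1.arcs ∪ D2.arcs)).outN v = D2.outN v := by
    intro v hv hne
    rw [houtU, hout1e v (hnot1 v hv hne), Finset.empty_union]
  have hDinu : (FinDigraph.mk (D1.verts ∪ D2.verts) (D1.arcs ∪ D2.arcs)).inN u = D2.inN u := by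
    rw [hinU, hin, Finset.empty_union]
  have hDoutu : (FinDigraph.mk (D1.verts ∪ D2.verts) (D1.arcs ∪ D2.arcs)).outN u = D1.outN u := by
    rw [houtU, hout, Finset.union_empty]
  -- Acyclicity of the union
  have hacyc : (FinDigraph.mk (D1.verts ∪ D2.verts) (D1.arcs ∪ D2.arcs)).IsAcyclic := by
    rintro ⟨n, x, hn3, hinj, harc, hlast⟩
    have hn : 0 < n := by omega
    have harcs : ∀ i < n, (x i, x ((i + 1) % n)) ∈ D1.arcs ∪ D2.arcs := by
      intro i hi
      rcases Nat.lt_or_ge (i + 1) n with h | h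
      · rw [Nat.mod_eq_of_lt h]; exact harc i h
      · have hi1 : i + 1 = n := by omega
        have h0 : (i + 1) % n = 0 := by rw [hi1, Nat.mod_self]
        have hieq : i = n - 1 := by omega
        rw [h0, hieq]
        exact hlast
    set f : ℕ → Bool := fun i => decide ((x i, x ((i + 1) % n)) ∈ D1.arcs) with hf
    have hmem1 : ∀ i, f i = true → (x i, x ((i + 1) % n)) ∈ D1.arcs := by
      intro i hfi
      simpa [hf] using hfi
    have hmem2 : ∀ i, i < n → f i = false → (x i, x ((i + 1) % n)) ∈ D2.arcs := by
      intro i hi hfi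
      rcases Finset.mem_union.mp (harcs i hi) with h | h
      · simp [hf, h] at hfi
      · exact h
    by_cases hall : ∀ i < n, f i = true
    · apply hac1
      refine ⟨n, x, hn3, hinj, ?_, ?_⟩
      · intro i hi
        have := hmem1 i (hall i (by omega))
        rwa [Nat.mod_eq_of_lt hi] at this
      · have := hmem1 (n - 1) (hall (n - 1) (by omega))
        have h0 : (n - 1 + 1) % n = 0 := by
          have hh : n - 1 + 1 = n := by omega
          rw [hh, Nat.mod_self]
        rwa [h0] at this
    by_cases hall2 : ∀ i < n, f i = false
    · apply hac2
      refine ⟨n, x, hn3, hinj, ?_, ?_⟩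
      · intro i hi
        have := hmem2 i (by omega) (hall2 i (by omega))
        rwa [Nat.mod_eq_of_lt hi] at this
      · have := hmem2 (n - 1) (by omega) (hall2 (n - 1) (by omega))
        have h0 : (n - 1 + 1) % n = 0 := by
          have hh : n - 1 + 1 = n := by omega
          rw [hh, Nat.mod_self]
        rwa [h0] at this
    push_neg at hall hall2
    obtain ⟨i, hi, hfi⟩ := hall
    obtain ⟨j, hj, hfj⟩ := hall2
    have hfi' : f i = false := by
      cases h : f i with
      | false => rfl
      | true => exact absurd h hfi
    have hfj' : f j = true := by
      cases h : f j with
      | false => exact absurd h hfj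
      | true => rfl
    obtain ⟨k1, hk1, hk1t, hk1f⟩ := cyc_change hn f hj hi hfj' hfi'
    obtain ⟨k2, hk2, hk2t, hk2f⟩ :=
      cyc_change hn (fun k => !f k) hi hj (by simp [hfi']) (by simp [hfj'])
    have hk2t' : f k2 = false := by simpa using hk2t
    have hk2f' : f ((k2 + 1) % n) = true := by simpa using hk2f
    have hne : k1 ≠ k2 := by
      intro h
      rw [h, hk2t'] at hk1t
      exact Bool.false_ne_true hk1t
    have hm1lt : (k1 + 1) % n < n := Nat.mod_lt _ hn
    have hm2lt : (k2 + 1) % n < n := Nat.mod_lt _ hn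
    have modsucc : ∀ a, a < n → (a + 1) % n = if a + 1 = n then 0 else a + 1 := by
      intro a ha
      by_cases h : a + 1 = n
      · simp [h]
      · rw [if_neg h, Nat.mod_eq_of_lt (by omega)]
    have hmne : (k1 + 1) % n ≠ (k2 + 1) % n := by
      rw [modsucc k1 hk1, modsucc k2 hk2]
      split_ifs <;> omega
    have hxm1 : x ((k1 + 1) % n) = u := by
      have hA : (x k1, x ((k1 + 1) % n)) ∈ D1.arcs := hmem1 k1 hk1t
      have hB : (x ((k1 + 1) % n), x (((k1 + 1) % n + 1) % n)) ∈ D2.arcs :=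
        hmem2 _ hm1lt hk1f
      exact honly _ (harc1 _ hA).2.1 (harc2 _ hB).1
    have hxm2 : x ((k2 + 1) % n) = u := by
      have hA : (x k2, x ((k2 + 1) % n)) ∈ D2.arcs := hmem2 k2 hk2 hk2t'
      have hB : (x ((k2 + 1) % n), x (((k2 + 1) % n + 1) % n)) ∈ D1.arcs :=
        hmem1 _ hk2f'
      exact honly _ (harc1 _ hB).1 (harc2 _ hA).2.1
    exact hinj _ hm1lt _ hm2lt hmne (hxm1.trans hxm2.symm)
  -- NH of the union
  have hNH : (FinDigraph.mk (D1.verts ∪ D2.verts) (D1.arcs ∪ D2.arcs)).NH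
      = H1.edges ∪ H2.edges := by
    rw [← hnh1, ← hnh2]
    ext e
    rw [Finset.mem_union, FinDigraph.mem_NH', FinDigraph.mem_NH', FinDigraph.mem_NH']
    constructor
    · rintro ⟨⟨v, hvmem, hve⟩ | ⟨v, hvmem, hve⟩, hcard⟩
      · by_cases hvu : v = u
        · subst hvu
          refine Or.inr ⟨Or.inl ⟨v, hu2, ?_⟩, hcard⟩
          rw [← hDinu]; exact hve
        · rcases Finset.mem_union.mp hvmem with hv' | hv'
          · refine Or.inl ⟨Or.inl ⟨v, hv', ?_⟩, hcard⟩
            rw [← hDin1 v hv' hvu]; exact hve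
          · refine Or.inr ⟨Or.inl ⟨v, hv', ?_⟩, hcard⟩
            rw [← hDin2 v hv' hvu]; exact hve
      · by_cases hvu : v = u
        · subst hvu
          refine Or.inl ⟨Or.inr ⟨v, hu1, ?_⟩, hcard⟩
          rw [← hDoutu]; exact hve
        · rcases Finset.mem_union.mp hvmem with hv' | hv'
          · refine Or.inl ⟨Or.inr ⟨v, hv', ?_⟩, hcard⟩
            rw [← hDout1 v hv' hvu]; exact hve
          · refine Or.inr ⟨Or.inr ⟨v, hv', ?_⟩, hcard⟩
            rw [← hDout2 v hv' hvu]; exact hve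
    · rintro (⟨⟨v, hvmem, hve⟩ | ⟨v, hvmem, hve⟩, hcard⟩ | ⟨⟨v, hvmem, hve⟩ | ⟨v, hvmem, hve⟩, hcard⟩)
      · by_cases hvu : v = u
        · subst hvu
          rw [hin] at hve
          rw [← hve] at hcard
          simp at hcard
        · refine ⟨Or.inl ⟨v, Finset.mem_union_left _ hvmem, ?_⟩, hcard⟩
          rw [hDin1 v hvmem hvu]; exact hve
      · by_cases hvu : v = u
        · subst hvu
          refine ⟨Or.inr ⟨v, Finset.mem_union_left _ hvmem, ?_⟩, hcard⟩
          rw [hDoutu]; exact hve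
        · refine ⟨Or.inr ⟨v, Finset.mem_union_left _ hvmem, ?_⟩, hcard⟩
          rw [hDout1 v hvmem hvu]; exact hve
      · by_cases hvu : v = u
        · subst hvu
          refine ⟨Or.inl ⟨v, Finset.mem_union_right _ hvmem, ?_⟩, hcard⟩
          rw [hDinu]; exact hve
        · refine ⟨Or.inl ⟨v, Finset.mem_union_right _ hvmem, ?_⟩, hcard⟩
          rw [hDin2 v hvmem hvu]; exact hve
      · by_cases hvu : v = u
        · subst hvu
          rw [hout] at hve
          rw [← hve] at hcard
          simp at hcard
        · refine ⟨Or.inr ⟨v, Finset.mem_union_right _ hvmem, ?_⟩, hcard⟩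
          rw [hDout2 v hvmem hvu]; exact hve
  -- degree facts
  have hdegmono1 : ∀ v : α, H1.degree v ≤ ((H1.edges ∪ H2.edges).filter fun f => v ∈ f).card :=
    fun v => Finset.card_le_card (Finset.filter_subset_filter _ Finset.subset_union_left)
  have hdegmono2 : ∀ v : α, H2.degree v ≤ ((H1.edges ∪ H2.edges).filter fun f => v ∈ f).card :=
    fun v => Finset.card_le_card (Finset.filter_subset_filter _ Finset.subset_union_right)
  have hdegu : 2 ≤ ((H1.edges ∪ H2.edges).filter fun f => u ∈ f).card := by
    have hp1 : 0 < (H1.edges.filter fun f => u ∈ f).card := by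
      unfold FinHypergraph.degree at hb1; omega
    have hp2 : 0 < (H2.edges.filter fun f => u ∈ f).card := by
      unfold FinHypergraph.degree at hb2; omega
    obtain ⟨e1, he1⟩ := Finset.card_pos.mp hp1
    obtain ⟨e2, he2⟩ := Finset.card_pos.mp hp2
    have he1' := Finset.mem_filter.mp he1
    have he2' := Finset.mem_filter.mp he2
    have hne : e1 ≠ e2 := by
      intro h
      have hs1 : e1 ⊆ D1.verts := by rw [hv1]; exact H1.edge_sub e1 he1'.1
      have hs2 : e1 ⊆ D2.verts := by rw [h, hv2]; exact H2.edge_sub e2 he2'.1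
      have hsu : e1 ⊆ {u} := by
        intro w hw
        rw [← hint]
        exact Finset.mem_inter.mpr ⟨hs1 hw, hs2 hw⟩
      have hc := H1.edge_card e1 he1'.1
      have := Finset.card_le_card hsu
      simp at this
      omega
    have hsub : ({e1, e2} : Finset (Finset α)) ⊆
        (H1.edges ∪ H2.edges).filter fun f => u ∈ f := by
      intro g hg
      rcases Finset.mem_insert.mp hg with rfl | hg
      · exact Finset.mem_filter.mpr ⟨Finset.mem_union_left _ he1'.1, he1'.2⟩
      · rw [Finset.mem_singleton] at hg
        subst hg
        exact Finset.mem_filter.mpr ⟨Finset.mem_union_right _ he2'.1, he2'.2⟩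
    calc 2 = ({e1, e2} : Finset (Finset α)).card := (Finset.card_pair hne).symm
      _ ≤ _ := Finset.card_le_card hsub
  refine ⟨⟨H1.verts ∪ H2.verts, H1.edges ∪ H2.edges, ?_, ?_⟩, rfl, rfl, hacyc, ?_, hNH, ?_⟩
  · intro e he
    rcases Finset.mem_union.mp he with h | h
    · exact (H1.edge_sub e h).trans Finset.subset_union_left
    · exact (H2.edge_sub e h).trans Finset.subset_union_right
  · intro e he
    rcases Finset.mem_union.mp he with h | h
    · exact H1.edge_card e h
    · exact H2.edge_card e h
  · show D1.verts ∪ D2.verts = H1.verts ∪ H2.verts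
    rw [hv1, hv2]
  · intro e he
    rcases Finset.mem_union.mp he with he1 | he2
    · refine le_trans (Finset.card_le_card (Finset.subset_iff.mpr ?_)) (hbud1 e he1)
      intro v hv
      rw [Finset.mem_filter] at hv ⊢
      obtain ⟨hve, hdeg, hinne, houtne⟩ := hv
      have hvu : v ≠ u := by
        rintro rfl
        have : ((H1.edges ∪ H2.edges).filter fun f => v ∈ f).card = 1 := hdeg
        omega
      have hvd1 : v ∈ D1.verts := by rw [hv1]; exact H1.edge_sub e he1 hve
      have hge : 0 < (H1.edges.filter fun f => v ∈ f).card :=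
        Finset.card_pos.mpr ⟨e, Finset.mem_filter.mpr ⟨he1, hve⟩⟩
      have hle : (H1.edges.filter fun f => v ∈ f).card ≤
          ((H1.edges ∪ H2.edges).filter fun f => v ∈ f).card :=
        Finset.card_le_card (Finset.filter_subset_filter _ Finset.subset_union_left)
      have hd1 : ((H1.edges ∪ H2.edges).filter fun f => v ∈ f).card = 1 := hdeg
      refine ⟨hve, ?_, ?_, ?_⟩
      · show (H1.edges.filter fun f => v ∈ f).card = 1
        omega
      · rw [← hDin1 v hvd1 hvu]; exact hinne
      · rw [← hDout1 v hvd1 hvu]; exact houtne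
    · refine le_trans (Finset.card_le_card (Finset.subset_iff.mpr ?_)) (hbud2 e he2)
      intro v hv
      rw [Finset.mem_filter] at hv ⊢
      obtain ⟨hve, hdeg, hinne, houtne⟩ := hv
      have hvu : v ≠ u := by
        rintro rfl
        have : ((H1.edges ∪ H2.edges).filter fun f => v ∈ f).card = 1 := hdeg
        omega
      have hvd2 : v ∈ D2.verts := by rw [hv2]; exact H2.edge_sub e he2 hve
      have hge : 0 < (H2.edges.filter fun f => v ∈ f).card :=
        Finset.card_pos.mpr ⟨e, Finset.mem_filter.mpr ⟨he2, hve⟩⟩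
      have hle : (H2.edges.filter fun f => v ∈ f).card ≤
          ((H1.edges ∪ H2.edges).filter fun f => v ∈ f).card :=
        Finset.card_le_card (Finset.filter_subset_filter _ Finset.subset_union_right)
      have hd1 : ((H1.edges ∪ H2.edges).filter fun f => v ∈ f).card = 1 := hdeg
      refine ⟨hve, ?_, ?_, ?_⟩
      · show (H2.edges.filter fun f => v ∈ f).card = 1
        omega
      · rw [← hDin2 v hvd2 hvu]; exact hinne
      · rw [← hDout2 v hvd2 hvu]; exact houtne
end
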